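/- arXiv:1401.1565 — 5 statements merged into one kernel-verified Lean document; each statement's English description precedes it below -/
import Mathlib

section
/- The homology ker δ / im δ of the complex (C, δ) is a free R-module of rank one, generated by the homology class of z_6. -/
/-!
Let `F = ℤ/2ℤ` and `R = F[U, U⁻¹]`. `C` is the free `R`-module on thirteen
generators `z 0, ..., z 12` (modeled as `Fin 13 → R` with the standard basis),
and `δ` is the `R`-linear map determined by `δ (z 0) = z 1`, `δ (z 2) = z 1`,
`δ (z 3) = z 2 + z 4`, `δ (z 4) = z 1`, `δ (z 5) = z 0 + z 4 + z 6`,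
`δ (z 7) = z 6 + z 8 + z 12`, `δ (z 8) = z 11`, `δ (z 9) = z 8 + z 10`,
`δ (z 10) = z 11`, `δ (z 12) = z 11`, `δ (z 1) = δ (z 6) = δ (z 11) = 0`.

STATEMENT: The homology `ker δ / im δ` is a free `R`-module of rank one,
generated by the homology class of `z 6`; i.e., every cycle `c` can be written
uniquely as `r • z 6` plus a boundary.
-/

noncomputable section

abbrev R : Type := LaurentPolynomial (ZMod 2)

abbrev C : Type := Fin 13 → R

/-- The standard basis of `C`, modeling the generators `z_0, ..., z_12`. -/
def z (i : Fin 13) : C := Pi.single i 1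

theorem homology_of_C_free_rank_one_generated_by_z6
    (δ : C →ₗ[R] C)
    (h0 : δ (z 0) = z 1) (h1 : δ (z 1) = 0)
    (h2 : δ (z 2) = z 1) (h3 : δ (z 3) = z 2 + z 4)
    (h4 : δ (z 4) = z 1) (h5 : δ (z 5) = z 0 + z 4 + z 6)
    (h6 : δ (z 6) = 0) (h7 : δ (z 7) = z 6 + z 8 + z 12)
    (h8 : δ (z 8) = z 11) (h9 : δ (z 9) = z 8 + z 10)
    (h10 : δ (z 10) = z 11) (h11 : δ (z 11) = 0)
    (h12 : δ (z 12) = z 11) :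
    ∀ c : C, δ c = 0 → ∃! r : R, ∃ b : C, c = r • z 6 + δ b := by
  -- characteristic 2
  have htwo : (2 : R) = 0 := by
    rw [show (2:R) = algebraMap (ZMod 2) R 2 from (map_ofNat _ 2).symm,
        show (2 : ZMod 2) = 0 from rfl, map_zero]
  -- the general formula for δ
  have key : ∀ x : C,
      δ x = x 5 • z 0 + (x 0 + x 2 + x 4) • z 1 + x 3 • z 2 + (x 3 + x 5) • z 4
        + (x 5 + x 7) • z 6 + (x 7 + x 9) • z 8 + x 9 • z 10
        + (x 8 + x 10 + x 12) • z 11 + x 7 • z 12 := by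
    intro x
    have hx : x = x 0 • z 0 + x 1 • z 1 + x 2 • z 2 + x 3 • z 3 + x 4 • z 4
        + x 5 • z 5 + x 6 • z 6 + x 7 • z 7 + x 8 • z 8 + x 9 • z 9
        + x 10 • z 10 + x 11 • z 11 + x 12 • z 12 := by
      funext j; fin_cases j <;> simp [z, Pi.single_apply]
    conv_lhs => rw [hx]
    simp only [map_add, map_smul, h0, h1, h2, h3, h4, h5, h6, h7, h8, h9, h10,
      h11, h12, smul_zero]
    module
  intro c hc
  -- extract the cycle conditions
  have H : c 5 • z 0 + (c 0 + c 2 + c 4) • z 1 + c 3 • z 2 + (c 3 + c 5) • z 4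
      + (c 5 + c 7) • z 6 + (c 7 + c 9) • z 8 + c 9 • z 10
      + (c 8 + c 10 + c 12) • z 11 + c 7 • z 12 = 0 := by
    rw [← key c]; exact hc
  have e0 : c 5 = 0 := by simpa [z, Pi.single_apply] using congrFun H 0
  have e1 : c 0 + c 2 + c 4 = 0 := by
    simpa [z, Pi.single_apply] using congrFun H 1
  have e2 : c 3 = 0 := by simpa [z, Pi.single_apply] using congrFun H 2
  have e6 : c 5 + c 7 = 0 := by simpa [z, Pi.single_apply] using congrFun H 6
  have e10 : c 9 = 0 := by simpa [z, Pi.single_apply] using congrFun H 10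
  have e11 : c 8 + c 10 + c 12 = 0 := by
    simpa [z, Pi.single_apply] using congrFun H 11
  have e7 : c 7 = 0 := by linear_combination e6 - e0
  refine ⟨c 6 + c 0 + c 12,
    ⟨c 1 • z 0 + c 2 • z 3 + c 0 • z 5 + c 12 • z 7 + c 11 • z 8 + c 10 • z 9, ?_⟩, ?_⟩
  · have hδb : δ (c 1 • z 0 + c 2 • z 3 + c 0 • z 5 + c 12 • z 7 + c 11 • z 8 + c 10 • z 9)
        = c 0 • z 0 + c 1 • z 1 + c 2 • z 2 + (c 2 + c 0) • z 4
          + (c 0 + c 12) • z 6 + (c 12 + c 10) • z 8 + c 10 • z 10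
          + c 11 • z 11 + c 12 • z 12 := by
      simp only [map_add, map_smul, h0, h3, h5, h7, h8, h9]
      module
    rw [hδb]
    funext j
    fin_cases j <;> simp [z, Pi.single_apply]
    · exact e2
    · linear_combination e1 - (c 0 + c 2) * htwo
    · exact e0
    · linear_combination (-(c 0 + c 12)) * htwo
    · exact e7
    · linear_combination e11 - (c 10 + c 12) * htwo
    · exact e10
  · rintro r ⟨b, hb⟩
    have Hb := congrFun (hb.trans (by rw [key b])) 6
    have Hb0 := congrFun (hb.trans (by rw [key b])) 0
    have Hb12 := congrFun (hb.trans (by rw [key b])) 12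
    simp [z, Pi.single_apply] at Hb Hb0 Hb12
    linear_combination -Hb - Hb0 - Hb12 - (b 5 + b 7) * htwo

end
end

section
/- Define the following 45 elements of T: z_0 = x_0y_0, z_1 = x_0y_1, z_2 = x_0y_2 + x_1y_3 + x_3y_3 + x_4y_4, z_3 = x_1y_2, z_4 = x_2y_2 + x_3y_3 + x_1y_1 + x_4y_4, z_5 = x_3y_2 + x_5y_4 + x_1y_0, z_6 = x_4y_2 + x_5y_3 + x_3y_1 + x_6y_4 + x_2y_0, z_7 = x_5y_2 + x_7y_4 + x_3y_0, z_8 = x_6y_2 + x_7y_3 + x_5y_1 + x_4y_0, z_9 = x_7y_2, z_{10} = x_8y_2 + x_7y_1 + x_4y_0 + x_5y_1, z_{11} = x_8y_3, z_{12} = x_8y_4; and for i = 0,1,2,3: w^i_0 = x_{2i+1}y_4, w^i_1 = x_{2i}y_4, w^i_2 = x_{2i}y_3, w^i_3 = x_{2i+1}y_3 + x_{2i+2}y_4, and w^{i+4}_0 = x_{2i+1}y_0, w^{i+4}_1 = x_{2i+1}y_1 + x_{2i}y_0, w^{i+4}_2 = x_{2i+2}y_1, w^{i+4}_3 = x_{2i+2}y_0.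 Then: (1) these 45 elements form an R-basis of T; (2) the R-span of {z_0, ..., z_{12}} is closed under ∂, with ∂(z_0) = z_1, ∂(z_2) = z_1, ∂(z_3) = z_2 + z_4, ∂(z_4) = z_1, ∂(z_5) = z_0 + z_4 + z_6, ∂(z_7) = z_6 + z_8 + z_{12}, ∂(z_8) = z_{11}, ∂(z_9) = z_8 + z_{10}, ∂(z_{10}) = z_{11}, ∂(z_{12}) = z_{11}, and ∂(z_1) = ∂(z_6) = ∂(z_{11}) = 0; (3) for each i = 0, ..., 7, the R-span of {w^i_0, w^i_1, w^i_2, w^i_3} is closed under ∂, with ∂(w^i_0) = w^i_1 + w^i_3, ∂(w^i_1) = w^i_2, ∂(w^i_3) = w^i_2, and ∂(w^i_2) = 0. In particular T decomposes as a direct sum of these nine subcomplexes. -/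
/-!
Let `F = ℤ/2ℤ` and `R = F[U, U⁻¹]`. `X` is the free `R`-module on generators
`x 0, ..., x 8` with differential `dX` as for `CFK^∞(T_{2,9})`, `Y` is the free
`R`-module on generators `y 0, ..., y 4` with differential `dY` as for
`CFK^∞(-T_{2,3;2,5})`, and `T = X ⊗[R] Y` carries the differential
`dT = dX ⊗ 1 + 1 ⊗ dY` (Künneth).

STATEMENT: The 45 elements `zel 0, ..., zel 12` and `wel i j` (`i : Fin 8`,
`j : Fin 4`) defined below form an `R`-basis of `T`; the span of the `zel`'s is
closed under `dT`, with `dT (zel 0) = zel 1`, `dT (zel 2) = zel 1`,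
`dT (zel 3) = zel 2 + zel 4`, `dT (zel 4) = zel 1`,
`dT (zel 5) = zel 0 + zel 4 + zel 6`, `dT (zel 7) = zel 6 + zel 8 + zel 12`,
`dT (zel 8) = zel 11`, `dT (zel 9) = zel 8 + zel 10`, `dT (zel 10) = zel 11`,
`dT (zel 12) = zel 11`, `dT (zel 1) = dT (zel 6) = dT (zel 11) = 0`; and for
each `i : Fin 8` the span of `wel i 0, ..., wel i 3` is closed under `dT`, with
`dT (wel i 0) = wel i 1 + wel i 3`, `dT (wel i 1) = wel i 2`,
`dT (wel i 3) = wel i 2`, `dT (wel i 2) = 0`.  (In particular `T` decomposes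
as the direct sum of these nine subcomplexes.)
-/

noncomputable section

open TensorProduct

abbrev X : Type := Fin 9 → R
abbrev Y : Type := Fin 5 → R
abbrev T : Type := X ⊗[R] Y

def x (i : Fin 9) : X := Pi.single i 1
def y (j : Fin 5) : Y := Pi.single j 1

/-- The generator `x_i y_j := x_i ⊗ y_j` of the tensor product `T`. -/
def t (i : Fin 9) (j : Fin 5) : T := x i ⊗ₜ[R] y j

/-- The elements `z_0, ..., z_12` of the change of basis. -/
def zel : Fin 13 → T :=
  ![t 0 0,
    t 0 1,
    t 0 2 + t 1 3 + t 3 3 + t 4 4,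
    t 1 2,
    t 2 2 + t 3 3 + t 1 1 + t 4 4,
    t 3 2 + t 5 4 + t 1 0,
    t 4 2 + t 5 3 + t 3 1 + t 6 4 + t 2 0,
    t 5 2 + t 7 4 + t 3 0,
    t 6 2 + t 7 3 + t 5 1 + t 4 0,
    t 7 2,
    t 8 2 + t 7 1 + t 4 0 + t 5 1,
    t 8 3,
    t 8 4]

/-- The elements `w^i_j` (`i = 0, ..., 7`, `j = 0, ..., 3`) of the change of
basis: for `i = 0,1,2,3`, `w^i_0 = x_{2i+1} y_4`, `w^i_1 = x_{2i} y_4`,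
`w^i_2 = x_{2i} y_3`, `w^i_3 = x_{2i+1} y_3 + x_{2i+2} y_4`; and
`w^{i+4}_0 = x_{2i+1} y_0`, `w^{i+4}_1 = x_{2i+1} y_1 + x_{2i} y_0`,
`w^{i+4}_2 = x_{2i+2} y_1`, `w^{i+4}_3 = x_{2i+2} y_0`. -/
def wel : Fin 8 → Fin 4 → T :=
  ![![t 1 4, t 0 4, t 0 3, t 1 3 + t 2 4],
    ![t 3 4, t 2 4, t 2 3, t 3 3 + t 4 4],
    ![t 5 4, t 4 4, t 4 3, t 5 3 + t 6 4],
    ![t 7 4, t 6 4, t 6 3, t 7 3 + t 8 4],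
    ![t 1 0, t 1 1 + t 0 0, t 2 1, t 2 0],
    ![t 3 0, t 3 1 + t 2 0, t 4 1, t 4 0],
    ![t 5 0, t 5 1 + t 4 0, t 6 1, t 6 0],
    ![t 7 0, t 7 1 + t 6 0, t 8 1, t 8 0]]


abbrev K : Type := Fin 13 ⊕ (Fin 8 × Fin 4)

def sgl (k : K) : K → R := Pi.single k 1

lemma two_R : (2 : R) = 0 := by
  have h : (2 : R) = LaurentPolynomial.C 2 := by rw [map_ofNat]
  rw [h, show (2 : ZMod 2) = 0 from rfl, map_zero]

section Char2
variable {G : Type*} [AddCommGroup G] [Module R G]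
lemma hh (a : G) : a + a = 0 := by rw [← two_smul R a, two_R, zero_smul]
lemma e2 (a : G) : (2:ℤ) • a = 0 := by rw [two_zsmul]; exact hh a
lemma e4 (a : G) : (4:ℤ) • a = 0 := by rw [show (4:ℤ) = 2+2 by norm_num, add_smul, e2, add_zero]
lemma e6 (a : G) : (6:ℤ) • a = 0 := by rw [show (6:ℤ) = 2+4 by norm_num, add_smul, e2, e4, add_zero]
lemma e8 (a : G) : (8:ℤ) • a = 0 := by rw [show (8:ℤ) = 2+6 by norm_num, add_smul, e2, e6, add_zero]
lemma nn2 (a : G) : (2:ℕ) • a = 0 := by rw [two_nsmul]; exact hh a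
lemma nn4 (a : G) : (4:ℕ) • a = 0 := by rw [show (4:ℕ) = 2+2 by norm_num, add_smul, nn2, add_zero]
lemma nn6 (a : G) : (6:ℕ) • a = 0 := by rw [show (6:ℕ) = 2+4 by norm_num, add_smul, nn2, nn4, add_zero]
lemma nn8 (a : G) : (8:ℕ) • a = 0 := by rw [show (8:ℕ) = 2+6 by norm_num, add_smul, nn2, nn6, add_zero]
lemma eq_of_c2 {a b : G} (h : a + b = 0) : a = b := by
  have h2 : a + (b + b) = (a + b) + b := by abel
  rw [hh, h, add_zero, zero_add] at h2; exact h2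
end Char2

def bT : Module.Basis (Fin 9 × Fin 5) R T :=
  (Pi.basisFun R (Fin 9)).tensorProduct (Pi.basisFun R (Fin 5))

lemma bT_eq (i : Fin 9) (j : Fin 5) : bT (i, j) = t i j := by
  simp [bT, Module.Basis.tensorProduct_apply, t, x, y, Pi.basisFun_apply]

lemma sgl_indep : LinearIndependent R sgl := by
  have h := (Pi.basisFun R K).linearIndependent
  have e : ⇑(Pi.basisFun R K) = sgl := by
    funext k; simp [Pi.basisFun_apply, sgl, Pi.single]
  rwa [e] at h

def phiM : Fin 9 → Fin 5 → K → R :=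
  ![![sgl (Sum.inl 0), sgl (Sum.inl 1), sgl (Sum.inl 2) + sgl (Sum.inr (0, 3)) + sgl (Sum.inr (1, 1)) + sgl (Sum.inr (1, 3)), sgl (Sum.inr (0, 2)), sgl (Sum.inr (0, 1))],
    ![sgl (Sum.inr (4, 0)), sgl (Sum.inl 0) + sgl (Sum.inr (4, 1)), sgl (Sum.inl 3), sgl (Sum.inr (0, 3)) + sgl (Sum.inr (1, 1)), sgl (Sum.inr (0, 0))],
    ![sgl (Sum.inr (4, 3)), sgl (Sum.inr (4, 2)), sgl (Sum.inl 0) + sgl (Sum.inl 4) + sgl (Sum.inr (1, 3)) + sgl (Sum.inr (4, 1)), sgl (Sum.inr (1, 2)), sgl (Sum.inr (1, 1))],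
    ![sgl (Sum.inr (5, 0)), sgl (Sum.inr (4, 3)) + sgl (Sum.inr (5, 1)), sgl (Sum.inl 5) + sgl (Sum.inr (2, 0)) + sgl (Sum.inr (4, 0)), sgl (Sum.inr (1, 3)) + sgl (Sum.inr (2, 1)), sgl (Sum.inr (1, 0))],
    ![sgl (Sum.inr (5, 3)), sgl (Sum.inr (5, 2)), sgl (Sum.inl 6) + sgl (Sum.inr (2, 3)) + sgl (Sum.inr (5, 1)), sgl (Sum.inr (2, 2)), sgl (Sum.inr (2, 1))],
    ![sgl (Sum.inr (6, 0)), sgl (Sum.inr (5, 3)) + sgl (Sum.inr (6, 1)), sgl (Sum.inl 7) + sgl (Sum.inr (3, 0)) + sgl (Sum.inr (5, 0)), sgl (Sum.inr (2, 3)) + sgl (Sum.inr (3, 1)), sgl (Sum.inr (2, 0))],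
    ![sgl (Sum.inr (6, 3)), sgl (Sum.inr (6, 2)), sgl (Sum.inl 8) + sgl (Sum.inl 12) + sgl (Sum.inr (3, 3)) + sgl (Sum.inr (6, 1)), sgl (Sum.inr (3, 2)), sgl (Sum.inr (3, 1))],
    ![sgl (Sum.inr (7, 0)), sgl (Sum.inr (6, 3)) + sgl (Sum.inr (7, 1)), sgl (Sum.inl 9), sgl (Sum.inl 12) + sgl (Sum.inr (3, 3)), sgl (Sum.inr (3, 0))],
    ![sgl (Sum.inr (7, 3)), sgl (Sum.inr (7, 2)), sgl (Sum.inl 10) + sgl (Sum.inr (6, 1)) + sgl (Sum.inr (6, 3)) + sgl (Sum.inr (7, 1)), sgl (Sum.inl 11), sgl (Sum.inl 12)]]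

set_option maxHeartbeats 4000000 in
theorem change_of_basis_decomposition
    (dX : X →ₗ[R] X)
    (hx0 : dX (x 0) = 0) (hx1 : dX (x 1) = x 0 + x 2)
    (hx2 : dX (x 2) = 0) (hx3 : dX (x 3) = x 2 + x 4)
    (hx4 : dX (x 4) = 0) (hx5 : dX (x 5) = x 4 + x 6)
    (hx6 : dX (x 6) = 0) (hx7 : dX (x 7) = x 6 + x 8)
    (hx8 : dX (x 8) = 0)
    (dY : Y →ₗ[R] Y)
    (hy0 : dY (y 0) = y 1) (hy1 : dY (y 1) = 0)
    (hy2 : dY (y 2) = y 1 + y 3) (hy3 : dY (y 3) = 0)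
    (hy4 : dY (y 4) = y 3)
    (dT : T →ₗ[R] T)
    (hdT : dT = LinearMap.rTensor Y dX + LinearMap.lTensor X dY) :
    -- (1) the 45 elements form an `R`-basis of `T`
    (LinearIndependent R
        (Sum.elim zel (fun p : Fin 8 × Fin 4 => wel p.1 p.2)) ∧
      Submodule.span R
        (Set.range (Sum.elim zel (fun p : Fin 8 × Fin 4 => wel p.1 p.2))) = ⊤) ∧
    -- (2) the span of the `zel`'s is closed under `dT`, with these values
    (Submodule.span R (Set.range zel) ≤
        (Submodule.span R (Set.range zel)).comap dT ∧
      dT (zel 0) = zel 1 ∧ dT (zel 1) = 0 ∧ dT (zel 2) = zel 1 ∧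
      dT (zel 3) = zel 2 + zel 4 ∧ dT (zel 4) = zel 1 ∧
      dT (zel 5) = zel 0 + zel 4 + zel 6 ∧ dT (zel 6) = 0 ∧
      dT (zel 7) = zel 6 + zel 8 + zel 12 ∧ dT (zel 8) = zel 11 ∧
      dT (zel 9) = zel 8 + zel 10 ∧ dT (zel 10) = zel 11 ∧
      dT (zel 11) = 0 ∧ dT (zel 12) = zel 11) ∧
    -- (3) each `wel i` spans a subcomplex, with these values
    (∀ i : Fin 8,
      Submodule.span R (Set.range (wel i)) ≤
        (Submodule.span R (Set.range (wel i))).comap dT ∧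
      dT (wel i 0) = wel i 1 + wel i 3 ∧ dT (wel i 1) = wel i 2 ∧
      dT (wel i 2) = 0 ∧ dT (wel i 3) = wel i 2) := by
  have dt : ∀ (i : Fin 9) (j : Fin 5), dT (t i j) = dX (x i) ⊗ₜ[R] y j + x i ⊗ₜ[R] dY (y j) := by
    intro i j; rw [hdT]; simp [t]
  have hz0 : dT (zel 0) = zel 1 := by
    show dT (t 0 0) = (t 0 1)
    simp only [map_add, dt]
    simp only [hx0, hx1, hx2, hx3, hx4, hx5, hx6, hx7, hx8, hy0, hy1, hy2, hy3, hy4, add_tmul, tmul_add, zero_tmul, tmul_zero, add_zero, zero_add, t]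
    try (apply eq_of_c2; abel_nf; try simp only [e2, e4, e6, e8, nn2, nn4, nn6, nn8, smul_zero, add_zero, zero_add])
  have hz1 : dT (zel 1) = 0 := by
    show dT (t 0 1) = 0
    simp only [map_add, dt]
    simp only [hx0, hx1, hx2, hx3, hx4, hx5, hx6, hx7, hx8, hy0, hy1, hy2, hy3, hy4, add_tmul, tmul_add, zero_tmul, tmul_zero, add_zero, zero_add, t]
    try (apply eq_of_c2; abel_nf; try simp only [e2, e4, e6, e8, nn2, nn4, nn6, nn8, smul_zero, add_zero, zero_add])
  have hz2 : dT (zel 2) = zel 1 := by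
    show dT (t 0 2 + t 1 3 + t 3 3 + t 4 4) = (t 0 1)
    simp only [map_add, dt]
    simp only [hx0, hx1, hx2, hx3, hx4, hx5, hx6, hx7, hx8, hy0, hy1, hy2, hy3, hy4, add_tmul, tmul_add, zero_tmul, tmul_zero, add_zero, zero_add, t]
    try (apply eq_of_c2; abel_nf; try simp only [e2, e4, e6, e8, nn2, nn4, nn6, nn8, smul_zero, add_zero, zero_add])
  have hz3 : dT (zel 3) = zel 2 + zel 4 := by
    show dT (t 1 2) = (t 0 2 + t 1 3 + t 3 3 + t 4 4) + (t 2 2 + t 3 3 + t 1 1 + t 4 4)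
    simp only [map_add, dt]
    simp only [hx0, hx1, hx2, hx3, hx4, hx5, hx6, hx7, hx8, hy0, hy1, hy2, hy3, hy4, add_tmul, tmul_add, zero_tmul, tmul_zero, add_zero, zero_add, t]
    try (apply eq_of_c2; abel_nf; try simp only [e2, e4, e6, e8, nn2, nn4, nn6, nn8, smul_zero, add_zero, zero_add])
  have hz4 : dT (zel 4) = zel 1 := by
    show dT (t 2 2 + t 3 3 + t 1 1 + t 4 4) = (t 0 1)
    simp only [map_add, dt]
    simp only [hx0, hx1, hx2, hx3, hx4, hx5, hx6, hx7, hx8, hy0, hy1, hy2, hy3, hy4, add_tmul, tmul_add, zero_tmul, tmul_zero, add_zero, zero_add, t]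
    try (apply eq_of_c2; abel_nf; try simp only [e2, e4, e6, e8, nn2, nn4, nn6, nn8, smul_zero, add_zero, zero_add])
  have hz5 : dT (zel 5) = zel 0 + zel 4 + zel 6 := by
    show dT (t 3 2 + t 5 4 + t 1 0) = (t 0 0) + (t 2 2 + t 3 3 + t 1 1 + t 4 4) + (t 4 2 + t 5 3 + t 3 1 + t 6 4 + t 2 0)
    simp only [map_add, dt]
    simp only [hx0, hx1, hx2, hx3, hx4, hx5, hx6, hx7, hx8, hy0, hy1, hy2, hy3, hy4, add_tmul, tmul_add, zero_tmul, tmul_zero, add_zero, zero_add, t]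
    try (apply eq_of_c2; abel_nf; try simp only [e2, e4, e6, e8, nn2, nn4, nn6, nn8, smul_zero, add_zero, zero_add])
  have hz6 : dT (zel 6) = 0 := by
    show dT (t 4 2 + t 5 3 + t 3 1 + t 6 4 + t 2 0) = 0
    simp only [map_add, dt]
    simp only [hx0, hx1, hx2, hx3, hx4, hx5, hx6, hx7, hx8, hy0, hy1, hy2, hy3, hy4, add_tmul, tmul_add, zero_tmul, tmul_zero, add_zero, zero_add, t]
    try (apply eq_of_c2; abel_nf; try simp only [e2, e4, e6, e8, nn2, nn4, nn6, nn8, smul_zero, add_zero, zero_add])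
  have hz7 : dT (zel 7) = zel 6 + zel 8 + zel 12 := by
    show dT (t 5 2 + t 7 4 + t 3 0) = (t 4 2 + t 5 3 + t 3 1 + t 6 4 + t 2 0) + (t 6 2 + t 7 3 + t 5 1 + t 4 0) + (t 8 4)
    simp only [map_add, dt]
    simp only [hx0, hx1, hx2, hx3, hx4, hx5, hx6, hx7, hx8, hy0, hy1, hy2, hy3, hy4, add_tmul, tmul_add, zero_tmul, tmul_zero, add_zero, zero_add, t]
    try (apply eq_of_c2; abel_nf; try simp only [e2, e4, e6, e8, nn2, nn4, nn6, nn8, smul_zero, add_zero, zero_add])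
  have hz8 : dT (zel 8) = zel 11 := by
    show dT (t 6 2 + t 7 3 + t 5 1 + t 4 0) = (t 8 3)
    simp only [map_add, dt]
    simp only [hx0, hx1, hx2, hx3, hx4, hx5, hx6, hx7, hx8, hy0, hy1, hy2, hy3, hy4, add_tmul, tmul_add, zero_tmul, tmul_zero, add_zero, zero_add, t]
    try (apply eq_of_c2; abel_nf; try simp only [e2, e4, e6, e8, nn2, nn4, nn6, nn8, smul_zero, add_zero, zero_add])
  have hz9 : dT (zel 9) = zel 8 + zel 10 := by
    show dT (t 7 2) = (t 6 2 + t 7 3 + t 5 1 + t 4 0) + (t 8 2 + t 7 1 + t 4 0 + t 5 1)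
    simp only [map_add, dt]
    simp only [hx0, hx1, hx2, hx3, hx4, hx5, hx6, hx7, hx8, hy0, hy1, hy2, hy3, hy4, add_tmul, tmul_add, zero_tmul, tmul_zero, add_zero, zero_add, t]
    try (apply eq_of_c2; abel_nf; try simp only [e2, e4, e6, e8, nn2, nn4, nn6, nn8, smul_zero, add_zero, zero_add])
  have hz10 : dT (zel 10) = zel 11 := by
    show dT (t 8 2 + t 7 1 + t 4 0 + t 5 1) = (t 8 3)
    simp only [map_add, dt]
    simp only [hx0, hx1, hx2, hx3, hx4, hx5, hx6, hx7, hx8, hy0, hy1, hy2, hy3, hy4, add_tmul, tmul_add, zero_tmul, tmul_zero, add_zero, zero_add, t]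
    try (apply eq_of_c2; abel_nf; try simp only [e2, e4, e6, e8, nn2, nn4, nn6, nn8, smul_zero, add_zero, zero_add])
  have hz11 : dT (zel 11) = 0 := by
    show dT (t 8 3) = 0
    simp only [map_add, dt]
    simp only [hx0, hx1, hx2, hx3, hx4, hx5, hx6, hx7, hx8, hy0, hy1, hy2, hy3, hy4, add_tmul, tmul_add, zero_tmul, tmul_zero, add_zero, zero_add, t]
    try (apply eq_of_c2; abel_nf; try simp only [e2, e4, e6, e8, nn2, nn4, nn6, nn8, smul_zero, add_zero, zero_add])
  have hz12 : dT (zel 12) = zel 11 := by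
    show dT (t 8 4) = (t 8 3)
    simp only [map_add, dt]
    simp only [hx0, hx1, hx2, hx3, hx4, hx5, hx6, hx7, hx8, hy0, hy1, hy2, hy3, hy4, add_tmul, tmul_add, zero_tmul, tmul_zero, add_zero, zero_add, t]
    try (apply eq_of_c2; abel_nf; try simp only [e2, e4, e6, e8, nn2, nn4, nn6, nn8, smul_zero, add_zero, zero_add])
  have hw0 : ∀ i : Fin 8, dT (wel i 0) = wel i 1 + wel i 3 := by
    intro i
    match i with
    | 0 =>
      show dT (t 1 4) = (t 0 4) + (t 1 3 + t 2 4)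
      simp only [map_add, dt]
      simp only [hx0, hx1, hx2, hx3, hx4, hx5, hx6, hx7, hx8, hy0, hy1, hy2, hy3, hy4, add_tmul, tmul_add, zero_tmul, tmul_zero, add_zero, zero_add, t]
      try (apply eq_of_c2; abel_nf; try simp only [e2, e4, e6, e8, nn2, nn4, nn6, nn8, smul_zero, add_zero, zero_add])
    | 1 =>
      show dT (t 3 4) = (t 2 4) + (t 3 3 + t 4 4)
      simp only [map_add, dt]
      simp only [hx0, hx1, hx2, hx3, hx4, hx5, hx6, hx7, hx8, hy0, hy1, hy2, hy3, hy4, add_tmul, tmul_add, zero_tmul, tmul_zero, add_zero, zero_add, t]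
      try (apply eq_of_c2; abel_nf; try simp only [e2, e4, e6, e8, nn2, nn4, nn6, nn8, smul_zero, add_zero, zero_add])
    | 2 =>
      show dT (t 5 4) = (t 4 4) + (t 5 3 + t 6 4)
      simp only [map_add, dt]
      simp only [hx0, hx1, hx2, hx3, hx4, hx5, hx6, hx7, hx8, hy0, hy1, hy2, hy3, hy4, add_tmul, tmul_add, zero_tmul, tmul_zero, add_zero, zero_add, t]
      try (apply eq_of_c2; abel_nf; try simp only [e2, e4, e6, e8, nn2, nn4, nn6, nn8, smul_zero, add_zero, zero_add])
    | 3 =>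
      show dT (t 7 4) = (t 6 4) + (t 7 3 + t 8 4)
      simp only [map_add, dt]
      simp only [hx0, hx1, hx2, hx3, hx4, hx5, hx6, hx7, hx8, hy0, hy1, hy2, hy3, hy4, add_tmul, tmul_add, zero_tmul, tmul_zero, add_zero, zero_add, t]
      try (apply eq_of_c2; abel_nf; try simp only [e2, e4, e6, e8, nn2, nn4, nn6, nn8, smul_zero, add_zero, zero_add])
    | 4 =>
      show dT (t 1 0) = (t 1 1 + t 0 0) + (t 2 0)
      simp only [map_add, dt]
      simp only [hx0, hx1, hx2, hx3, hx4, hx5, hx6, hx7, hx8, hy0, hy1, hy2, hy3, hy4, add_tmul, tmul_add, zero_tmul, tmul_zero, add_zero, zero_add, t]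
      try (apply eq_of_c2; abel_nf; try simp only [e2, e4, e6, e8, nn2, nn4, nn6, nn8, smul_zero, add_zero, zero_add])
    | 5 =>
      show dT (t 3 0) = (t 3 1 + t 2 0) + (t 4 0)
      simp only [map_add, dt]
      simp only [hx0, hx1, hx2, hx3, hx4, hx5, hx6, hx7, hx8, hy0, hy1, hy2, hy3, hy4, add_tmul, tmul_add, zero_tmul, tmul_zero, add_zero, zero_add, t]
      try (apply eq_of_c2; abel_nf; try simp only [e2, e4, e6, e8, nn2, nn4, nn6, nn8, smul_zero, add_zero, zero_add])
    | 6 =>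
      show dT (t 5 0) = (t 5 1 + t 4 0) + (t 6 0)
      simp only [map_add, dt]
      simp only [hx0, hx1, hx2, hx3, hx4, hx5, hx6, hx7, hx8, hy0, hy1, hy2, hy3, hy4, add_tmul, tmul_add, zero_tmul, tmul_zero, add_zero, zero_add, t]
      try (apply eq_of_c2; abel_nf; try simp only [e2, e4, e6, e8, nn2, nn4, nn6, nn8, smul_zero, add_zero, zero_add])
    | 7 =>
      show dT (t 7 0) = (t 7 1 + t 6 0) + (t 8 0)
      simp only [map_add, dt]
      simp only [hx0, hx1, hx2, hx3, hx4, hx5, hx6, hx7, hx8, hy0, hy1, hy2, hy3, hy4, add_tmul, tmul_add, zero_tmul, tmul_zero, add_zero, zero_add, t]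
      try (apply eq_of_c2; abel_nf; try simp only [e2, e4, e6, e8, nn2, nn4, nn6, nn8, smul_zero, add_zero, zero_add])
  have hw1 : ∀ i : Fin 8, dT (wel i 1) = wel i 2 := by
    intro i
    match i with
    | 0 =>
      show dT (t 0 4) = (t 0 3)
      simp only [map_add, dt]
      simp only [hx0, hx1, hx2, hx3, hx4, hx5, hx6, hx7, hx8, hy0, hy1, hy2, hy3, hy4, add_tmul, tmul_add, zero_tmul, tmul_zero, add_zero, zero_add, t]
      try (apply eq_of_c2; abel_nf; try simp only [e2, e4, e6, e8, nn2, nn4, nn6, nn8, smul_zero, add_zero, zero_add])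
    | 1 =>
      show dT (t 2 4) = (t 2 3)
      simp only [map_add, dt]
      simp only [hx0, hx1, hx2, hx3, hx4, hx5, hx6, hx7, hx8, hy0, hy1, hy2, hy3, hy4, add_tmul, tmul_add, zero_tmul, tmul_zero, add_zero, zero_add, t]
      try (apply eq_of_c2; abel_nf; try simp only [e2, e4, e6, e8, nn2, nn4, nn6, nn8, smul_zero, add_zero, zero_add])
    | 2 =>
      show dT (t 4 4) = (t 4 3)
      simp only [map_add, dt]
      simp only [hx0, hx1, hx2, hx3, hx4, hx5, hx6, hx7, hx8, hy0, hy1, hy2, hy3, hy4, add_tmul, tmul_add, zero_tmul, tmul_zero, add_zero, zero_add, t]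
      try (apply eq_of_c2; abel_nf; try simp only [e2, e4, e6, e8, nn2, nn4, nn6, nn8, smul_zero, add_zero, zero_add])
    | 3 =>
      show dT (t 6 4) = (t 6 3)
      simp only [map_add, dt]
      simp only [hx0, hx1, hx2, hx3, hx4, hx5, hx6, hx7, hx8, hy0, hy1, hy2, hy3, hy4, add_tmul, tmul_add, zero_tmul, tmul_zero, add_zero, zero_add, t]
      try (apply eq_of_c2; abel_nf; try simp only [e2, e4, e6, e8, nn2, nn4, nn6, nn8, smul_zero, add_zero, zero_add])
    | 4 =>
      show dT (t 1 1 + t 0 0) = (t 2 1)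
      simp only [map_add, dt]
      simp only [hx0, hx1, hx2, hx3, hx4, hx5, hx6, hx7, hx8, hy0, hy1, hy2, hy3, hy4, add_tmul, tmul_add, zero_tmul, tmul_zero, add_zero, zero_add, t]
      try (apply eq_of_c2; abel_nf; try simp only [e2, e4, e6, e8, nn2, nn4, nn6, nn8, smul_zero, add_zero, zero_add])
    | 5 =>
      show dT (t 3 1 + t 2 0) = (t 4 1)
      simp only [map_add, dt]
      simp only [hx0, hx1, hx2, hx3, hx4, hx5, hx6, hx7, hx8, hy0, hy1, hy2, hy3, hy4, add_tmul, tmul_add, zero_tmul, tmul_zero, add_zero, zero_add, t]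
      try (apply eq_of_c2; abel_nf; try simp only [e2, e4, e6, e8, nn2, nn4, nn6, nn8, smul_zero, add_zero, zero_add])
    | 6 =>
      show dT (t 5 1 + t 4 0) = (t 6 1)
      simp only [map_add, dt]
      simp only [hx0, hx1, hx2, hx3, hx4, hx5, hx6, hx7, hx8, hy0, hy1, hy2, hy3, hy4, add_tmul, tmul_add, zero_tmul, tmul_zero, add_zero, zero_add, t]
      try (apply eq_of_c2; abel_nf; try simp only [e2, e4, e6, e8, nn2, nn4, nn6, nn8, smul_zero, add_zero, zero_add])
    | 7 =>
      show dT (t 7 1 + t 6 0) = (t 8 1)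
      simp only [map_add, dt]
      simp only [hx0, hx1, hx2, hx3, hx4, hx5, hx6, hx7, hx8, hy0, hy1, hy2, hy3, hy4, add_tmul, tmul_add, zero_tmul, tmul_zero, add_zero, zero_add, t]
      try (apply eq_of_c2; abel_nf; try simp only [e2, e4, e6, e8, nn2, nn4, nn6, nn8, smul_zero, add_zero, zero_add])
  have hw2 : ∀ i : Fin 8, dT (wel i 2) = 0 := by
    intro i
    match i with
    | 0 =>
      show dT (t 0 3) = 0
      simp only [map_add, dt]
      simp only [hx0, hx1, hx2, hx3, hx4, hx5, hx6, hx7, hx8, hy0, hy1, hy2, hy3, hy4, add_tmul, tmul_add, zero_tmul, tmul_zero, add_zero, zero_add, t]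
      try (apply eq_of_c2; abel_nf; try simp only [e2, e4, e6, e8, nn2, nn4, nn6, nn8, smul_zero, add_zero, zero_add])
    | 1 =>
      show dT (t 2 3) = 0
      simp only [map_add, dt]
      simp only [hx0, hx1, hx2, hx3, hx4, hx5, hx6, hx7, hx8, hy0, hy1, hy2, hy3, hy4, add_tmul, tmul_add, zero_tmul, tmul_zero, add_zero, zero_add, t]
      try (apply eq_of_c2; abel_nf; try simp only [e2, e4, e6, e8, nn2, nn4, nn6, nn8, smul_zero, add_zero, zero_add])
    | 2 =>
      show dT (t 4 3) = 0
      simp only [map_add, dt]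
      simp only [hx0, hx1, hx2, hx3, hx4, hx5, hx6, hx7, hx8, hy0, hy1, hy2, hy3, hy4, add_tmul, tmul_add, zero_tmul, tmul_zero, add_zero, zero_add, t]
      try (apply eq_of_c2; abel_nf; try simp only [e2, e4, e6, e8, nn2, nn4, nn6, nn8, smul_zero, add_zero, zero_add])
    | 3 =>
      show dT (t 6 3) = 0
      simp only [map_add, dt]
      simp only [hx0, hx1, hx2, hx3, hx4, hx5, hx6, hx7, hx8, hy0, hy1, hy2, hy3, hy4, add_tmul, tmul_add, zero_tmul, tmul_zero, add_zero, zero_add, t]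
      try (apply eq_of_c2; abel_nf; try simp only [e2, e4, e6, e8, nn2, nn4, nn6, nn8, smul_zero, add_zero, zero_add])
    | 4 =>
      show dT (t 2 1) = 0
      simp only [map_add, dt]
      simp only [hx0, hx1, hx2, hx3, hx4, hx5, hx6, hx7, hx8, hy0, hy1, hy2, hy3, hy4, add_tmul, tmul_add, zero_tmul, tmul_zero, add_zero, zero_add, t]
      try (apply eq_of_c2; abel_nf; try simp only [e2, e4, e6, e8, nn2, nn4, nn6, nn8, smul_zero, add_zero, zero_add])
    | 5 =>
      show dT (t 4 1) = 0
      simp only [map_add, dt]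
      simp only [hx0, hx1, hx2, hx3, hx4, hx5, hx6, hx7, hx8, hy0, hy1, hy2, hy3, hy4, add_tmul, tmul_add, zero_tmul, tmul_zero, add_zero, zero_add, t]
      try (apply eq_of_c2; abel_nf; try simp only [e2, e4, e6, e8, nn2, nn4, nn6, nn8, smul_zero, add_zero, zero_add])
    | 6 =>
      show dT (t 6 1) = 0
      simp only [map_add, dt]
      simp only [hx0, hx1, hx2, hx3, hx4, hx5, hx6, hx7, hx8, hy0, hy1, hy2, hy3, hy4, add_tmul, tmul_add, zero_tmul, tmul_zero, add_zero, zero_add, t]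
      try (apply eq_of_c2; abel_nf; try simp only [e2, e4, e6, e8, nn2, nn4, nn6, nn8, smul_zero, add_zero, zero_add])
    | 7 =>
      show dT (t 8 1) = 0
      simp only [map_add, dt]
      simp only [hx0, hx1, hx2, hx3, hx4, hx5, hx6, hx7, hx8, hy0, hy1, hy2, hy3, hy4, add_tmul, tmul_add, zero_tmul, tmul_zero, add_zero, zero_add, t]
      try (apply eq_of_c2; abel_nf; try simp only [e2, e4, e6, e8, nn2, nn4, nn6, nn8, smul_zero, add_zero, zero_add])
  have hw3 : ∀ i : Fin 8, dT (wel i 3) = wel i 2 := by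
    intro i
    match i with
    | 0 =>
      show dT (t 1 3 + t 2 4) = (t 0 3)
      simp only [map_add, dt]
      simp only [hx0, hx1, hx2, hx3, hx4, hx5, hx6, hx7, hx8, hy0, hy1, hy2, hy3, hy4, add_tmul, tmul_add, zero_tmul, tmul_zero, add_zero, zero_add, t]
      try (apply eq_of_c2; abel_nf; try simp only [e2, e4, e6, e8, nn2, nn4, nn6, nn8, smul_zero, add_zero, zero_add])
    | 1 =>
      show dT (t 3 3 + t 4 4) = (t 2 3)
      simp only [map_add, dt]
      simp only [hx0, hx1, hx2, hx3, hx4, hx5, hx6, hx7, hx8, hy0, hy1, hy2, hy3, hy4, add_tmul, tmul_add, zero_tmul, tmul_zero, add_zero, zero_add, t]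
      try (apply eq_of_c2; abel_nf; try simp only [e2, e4, e6, e8, nn2, nn4, nn6, nn8, smul_zero, add_zero, zero_add])
    | 2 =>
      show dT (t 5 3 + t 6 4) = (t 4 3)
      simp only [map_add, dt]
      simp only [hx0, hx1, hx2, hx3, hx4, hx5, hx6, hx7, hx8, hy0, hy1, hy2, hy3, hy4, add_tmul, tmul_add, zero_tmul, tmul_zero, add_zero, zero_add, t]
      try (apply eq_of_c2; abel_nf; try simp only [e2, e4, e6, e8, nn2, nn4, nn6, nn8, smul_zero, add_zero, zero_add])
    | 3 =>
      show dT (t 7 3 + t 8 4) = (t 6 3)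
      simp only [map_add, dt]
      simp only [hx0, hx1, hx2, hx3, hx4, hx5, hx6, hx7, hx8, hy0, hy1, hy2, hy3, hy4, add_tmul, tmul_add, zero_tmul, tmul_zero, add_zero, zero_add, t]
      try (apply eq_of_c2; abel_nf; try simp only [e2, e4, e6, e8, nn2, nn4, nn6, nn8, smul_zero, add_zero, zero_add])
    | 4 =>
      show dT (t 2 0) = (t 2 1)
      simp only [map_add, dt]
      simp only [hx0, hx1, hx2, hx3, hx4, hx5, hx6, hx7, hx8, hy0, hy1, hy2, hy3, hy4, add_tmul, tmul_add, zero_tmul, tmul_zero, add_zero, zero_add, t]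
      try (apply eq_of_c2; abel_nf; try simp only [e2, e4, e6, e8, nn2, nn4, nn6, nn8, smul_zero, add_zero, zero_add])
    | 5 =>
      show dT (t 4 0) = (t 4 1)
      simp only [map_add, dt]
      simp only [hx0, hx1, hx2, hx3, hx4, hx5, hx6, hx7, hx8, hy0, hy1, hy2, hy3, hy4, add_tmul, tmul_add, zero_tmul, tmul_zero, add_zero, zero_add, t]
      try (apply eq_of_c2; abel_nf; try simp only [e2, e4, e6, e8, nn2, nn4, nn6, nn8, smul_zero, add_zero, zero_add])
    | 6 =>
      show dT (t 6 0) = (t 6 1)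
      simp only [map_add, dt]
      simp only [hx0, hx1, hx2, hx3, hx4, hx5, hx6, hx7, hx8, hy0, hy1, hy2, hy3, hy4, add_tmul, tmul_add, zero_tmul, tmul_zero, add_zero, zero_add, t]
      try (apply eq_of_c2; abel_nf; try simp only [e2, e4, e6, e8, nn2, nn4, nn6, nn8, smul_zero, add_zero, zero_add])
    | 7 =>
      show dT (t 8 0) = (t 8 1)
      simp only [map_add, dt]
      simp only [hx0, hx1, hx2, hx3, hx4, hx5, hx6, hx7, hx8, hy0, hy1, hy2, hy3, hy4, add_tmul, tmul_add, zero_tmul, tmul_zero, add_zero, zero_add, t]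
      try (apply eq_of_c2; abel_nf; try simp only [e2, e4, e6, e8, nn2, nn4, nn6, nn8, smul_zero, add_zero, zero_add])
  refine ⟨⟨?_, ?_⟩, ⟨?_, hz0, hz1, hz2, hz3, hz4, hz5, hz6, hz7, hz8, hz9, hz10, hz11, hz12⟩, ?_⟩
  · set v := Sum.elim zel (fun p : Fin 8 × Fin 4 => wel p.1 p.2) with hv
    set Φ : T →ₗ[R] (K → R) := bT.constr ℕ (fun p => phiM p.1 p.2) with hΦ
    have hb : ∀ (i : Fin 9) (j : Fin 5), Φ (t i j) = phiM i j := by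
      intro i j; rw [← bT_eq]; exact bT.constr_basis ℕ _ (i, j)
    have hvk : ∀ k : K, Φ (v k) = sgl k := by
      intro k
      match k with
      | Sum.inl 0 =>
        show Φ (t 0 0) = sgl (Sum.inl 0)
        simp only [map_add, hb]
        show (sgl (Sum.inl 0)) = sgl (Sum.inl 0)
        rfl
      | Sum.inl 1 =>
        show Φ (t 0 1) = sgl (Sum.inl 1)
        simp only [map_add, hb]
        show (sgl (Sum.inl 1)) = sgl (Sum.inl 1)
        rfl
      | Sum.inl 2 =>
        show Φ (t 0 2 + t 1 3 + t 3 3 + t 4 4) = sgl (Sum.inl 2)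
        simp only [map_add, hb]
        show (sgl (Sum.inl 2) + sgl (Sum.inr (0, 3)) + sgl (Sum.inr (1, 1)) + sgl (Sum.inr (1, 3))) + (sgl (Sum.inr (0, 3)) + sgl (Sum.inr (1, 1))) + (sgl (Sum.inr (1, 3)) + sgl (Sum.inr (2, 1))) + (sgl (Sum.inr (2, 1))) = sgl (Sum.inl 2)
        apply eq_of_c2; abel_nf; try simp only [e2, e4, e6, e8, nn2, nn4, nn6, nn8, smul_zero, add_zero, zero_add]
      | Sum.inl 3 =>
        show Φ (t 1 2) = sgl (Sum.inl 3)
        simp only [map_add, hb]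
        show (sgl (Sum.inl 3)) = sgl (Sum.inl 3)
        rfl
      | Sum.inl 4 =>
        show Φ (t 2 2 + t 3 3 + t 1 1 + t 4 4) = sgl (Sum.inl 4)
        simp only [map_add, hb]
        show (sgl (Sum.inl 0) + sgl (Sum.inl 4) + sgl (Sum.inr (1, 3)) + sgl (Sum.inr (4, 1))) + (sgl (Sum.inr (1, 3)) + sgl (Sum.inr (2, 1))) + (sgl (Sum.inl 0) + sgl (Sum.inr (4, 1))) + (sgl (Sum.inr (2, 1))) = sgl (Sum.inl 4)
        apply eq_of_c2; abel_nf; try simp only [e2, e4, e6, e8, nn2, nn4, nn6, nn8, smul_zero, add_zero, zero_add]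
      | Sum.inl 5 =>
        show Φ (t 3 2 + t 5 4 + t 1 0) = sgl (Sum.inl 5)
        simp only [map_add, hb]
        show (sgl (Sum.inl 5) + sgl (Sum.inr (2, 0)) + sgl (Sum.inr (4, 0))) + (sgl (Sum.inr (2, 0))) + (sgl (Sum.inr (4, 0))) = sgl (Sum.inl 5)
        apply eq_of_c2; abel_nf; try simp only [e2, e4, e6, e8, nn2, nn4, nn6, nn8, smul_zero, add_zero, zero_add]
      | Sum.inl 6 =>
        show Φ (t 4 2 + t 5 3 + t 3 1 + t 6 4 + t 2 0) = sgl (Sum.inl 6)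
        simp only [map_add, hb]
        show (sgl (Sum.inl 6) + sgl (Sum.inr (2, 3)) + sgl (Sum.inr (5, 1))) + (sgl (Sum.inr (2, 3)) + sgl (Sum.inr (3, 1))) + (sgl (Sum.inr (4, 3)) + sgl (Sum.inr (5, 1))) + (sgl (Sum.inr (3, 1))) + (sgl (Sum.inr (4, 3))) = sgl (Sum.inl 6)
        apply eq_of_c2; abel_nf; try simp only [e2, e4, e6, e8, nn2, nn4, nn6, nn8, smul_zero, add_zero, zero_add]
      | Sum.inl 7 =>
        show Φ (t 5 2 + t 7 4 + t 3 0) = sgl (Sum.inl 7)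
        simp only [map_add, hb]
        show (sgl (Sum.inl 7) + sgl (Sum.inr (3, 0)) + sgl (Sum.inr (5, 0))) + (sgl (Sum.inr (3, 0))) + (sgl (Sum.inr (5, 0))) = sgl (Sum.inl 7)
        apply eq_of_c2; abel_nf; try simp only [e2, e4, e6, e8, nn2, nn4, nn6, nn8, smul_zero, add_zero, zero_add]
      | Sum.inl 8 =>
        show Φ (t 6 2 + t 7 3 + t 5 1 + t 4 0) = sgl (Sum.inl 8)
        simp only [map_add, hb]
        show (sgl (Sum.inl 8) + sgl (Sum.inl 12) + sgl (Sum.inr (3, 3)) + sgl (Sum.inr (6, 1))) + (sgl (Sum.inl 12) + sgl (Sum.inr (3, 3))) + (sgl (Sum.inr (5, 3)) + sgl (Sum.inr (6, 1))) + (sgl (Sum.inr (5, 3))) = sgl (Sum.inl 8)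
        apply eq_of_c2; abel_nf; try simp only [e2, e4, e6, e8, nn2, nn4, nn6, nn8, smul_zero, add_zero, zero_add]
      | Sum.inl 9 =>
        show Φ (t 7 2) = sgl (Sum.inl 9)
        simp only [map_add, hb]
        show (sgl (Sum.inl 9)) = sgl (Sum.inl 9)
        rfl
      | Sum.inl 10 =>
        show Φ (t 8 2 + t 7 1 + t 4 0 + t 5 1) = sgl (Sum.inl 10)
        simp only [map_add, hb]
        show (sgl (Sum.inl 10) + sgl (Sum.inr (6, 1)) + sgl (Sum.inr (6, 3)) + sgl (Sum.inr (7, 1))) + (sgl (Sum.inr (6, 3)) + sgl (Sum.inr (7, 1))) + (sgl (Sum.inr (5, 3))) + (sgl (Sum.inr (5, 3)) + sgl (Sum.inr (6, 1))) = sgl (Sum.inl 10)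
        apply eq_of_c2; abel_nf; try simp only [e2, e4, e6, e8, nn2, nn4, nn6, nn8, smul_zero, add_zero, zero_add]
      | Sum.inl 11 =>
        show Φ (t 8 3) = sgl (Sum.inl 11)
        simp only [map_add, hb]
        show (sgl (Sum.inl 11)) = sgl (Sum.inl 11)
        rfl
      | Sum.inl 12 =>
        show Φ (t 8 4) = sgl (Sum.inl 12)
        simp only [map_add, hb]
        show (sgl (Sum.inl 12)) = sgl (Sum.inl 12)
        rfl
      | Sum.inr (0, 0) =>
        show Φ (t 1 4) = sgl (Sum.inr (0, 0))
        simp only [map_add, hb]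
        show (sgl (Sum.inr (0, 0))) = sgl (Sum.inr (0, 0))
        rfl
      | Sum.inr (0, 1) =>
        show Φ (t 0 4) = sgl (Sum.inr (0, 1))
        simp only [map_add, hb]
        show (sgl (Sum.inr (0, 1))) = sgl (Sum.inr (0, 1))
        rfl
      | Sum.inr (0, 2) =>
        show Φ (t 0 3) = sgl (Sum.inr (0, 2))
        simp only [map_add, hb]
        show (sgl (Sum.inr (0, 2))) = sgl (Sum.inr (0, 2))
        rfl
      | Sum.inr (0, 3) =>
        show Φ (t 1 3 + t 2 4) = sgl (Sum.inr (0, 3))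
        simp only [map_add, hb]
        show (sgl (Sum.inr (0, 3)) + sgl (Sum.inr (1, 1))) + (sgl (Sum.inr (1, 1))) = sgl (Sum.inr (0, 3))
        apply eq_of_c2; abel_nf; try simp only [e2, e4, e6, e8, nn2, nn4, nn6, nn8, smul_zero, add_zero, zero_add]
      | Sum.inr (1, 0) =>
        show Φ (t 3 4) = sgl (Sum.inr (1, 0))
        simp only [map_add, hb]
        show (sgl (Sum.inr (1, 0))) = sgl (Sum.inr (1, 0))
        rfl
      | Sum.inr (1, 1) =>
        show Φ (t 2 4) = sgl (Sum.inr (1, 1))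
        simp only [map_add, hb]
        show (sgl (Sum.inr (1, 1))) = sgl (Sum.inr (1, 1))
        rfl
      | Sum.inr (1, 2) =>
        show Φ (t 2 3) = sgl (Sum.inr (1, 2))
        simp only [map_add, hb]
        show (sgl (Sum.inr (1, 2))) = sgl (Sum.inr (1, 2))
        rfl
      | Sum.inr (1, 3) =>
        show Φ (t 3 3 + t 4 4) = sgl (Sum.inr (1, 3))
        simp only [map_add, hb]
        show (sgl (Sum.inr (1, 3)) + sgl (Sum.inr (2, 1))) + (sgl (Sum.inr (2, 1))) = sgl (Sum.inr (1, 3))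
        apply eq_of_c2; abel_nf; try simp only [e2, e4, e6, e8, nn2, nn4, nn6, nn8, smul_zero, add_zero, zero_add]
      | Sum.inr (2, 0) =>
        show Φ (t 5 4) = sgl (Sum.inr (2, 0))
        simp only [map_add, hb]
        show (sgl (Sum.inr (2, 0))) = sgl (Sum.inr (2, 0))
        rfl
      | Sum.inr (2, 1) =>
        show Φ (t 4 4) = sgl (Sum.inr (2, 1))
        simp only [map_add, hb]
        show (sgl (Sum.inr (2, 1))) = sgl (Sum.inr (2, 1))
        rfl
      | Sum.inr (2, 2) =>
        show Φ (t 4 3) = sgl (Sum.inr (2, 2))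
        simp only [map_add, hb]
        show (sgl (Sum.inr (2, 2))) = sgl (Sum.inr (2, 2))
        rfl
      | Sum.inr (2, 3) =>
        show Φ (t 5 3 + t 6 4) = sgl (Sum.inr (2, 3))
        simp only [map_add, hb]
        show (sgl (Sum.inr (2, 3)) + sgl (Sum.inr (3, 1))) + (sgl (Sum.inr (3, 1))) = sgl (Sum.inr (2, 3))
        apply eq_of_c2; abel_nf; try simp only [e2, e4, e6, e8, nn2, nn4, nn6, nn8, smul_zero, add_zero, zero_add]
      | Sum.inr (3, 0) =>
        show Φ (t 7 4) = sgl (Sum.inr (3, 0))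
        simp only [map_add, hb]
        show (sgl (Sum.inr (3, 0))) = sgl (Sum.inr (3, 0))
        rfl
      | Sum.inr (3, 1) =>
        show Φ (t 6 4) = sgl (Sum.inr (3, 1))
        simp only [map_add, hb]
        show (sgl (Sum.inr (3, 1))) = sgl (Sum.inr (3, 1))
        rfl
      | Sum.inr (3, 2) =>
        show Φ (t 6 3) = sgl (Sum.inr (3, 2))
        simp only [map_add, hb]
        show (sgl (Sum.inr (3, 2))) = sgl (Sum.inr (3, 2))
        rfl
      | Sum.inr (3, 3) =>
        show Φ (t 7 3 + t 8 4) = sgl (Sum.inr (3, 3))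
        simp only [map_add, hb]
        show (sgl (Sum.inl 12) + sgl (Sum.inr (3, 3))) + (sgl (Sum.inl 12)) = sgl (Sum.inr (3, 3))
        apply eq_of_c2; abel_nf; try simp only [e2, e4, e6, e8, nn2, nn4, nn6, nn8, smul_zero, add_zero, zero_add]
      | Sum.inr (4, 0) =>
        show Φ (t 1 0) = sgl (Sum.inr (4, 0))
        simp only [map_add, hb]
        show (sgl (Sum.inr (4, 0))) = sgl (Sum.inr (4, 0))
        rfl
      | Sum.inr (4, 1) =>
        show Φ (t 1 1 + t 0 0) = sgl (Sum.inr (4, 1))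
        simp only [map_add, hb]
        show (sgl (Sum.inl 0) + sgl (Sum.inr (4, 1))) + (sgl (Sum.inl 0)) = sgl (Sum.inr (4, 1))
        apply eq_of_c2; abel_nf; try simp only [e2, e4, e6, e8, nn2, nn4, nn6, nn8, smul_zero, add_zero, zero_add]
      | Sum.inr (4, 2) =>
        show Φ (t 2 1) = sgl (Sum.inr (4, 2))
        simp only [map_add, hb]
        show (sgl (Sum.inr (4, 2))) = sgl (Sum.inr (4, 2))
        rfl
      | Sum.inr (4, 3) =>
        show Φ (t 2 0) = sgl (Sum.inr (4, 3))
        simp only [map_add, hb]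
        show (sgl (Sum.inr (4, 3))) = sgl (Sum.inr (4, 3))
        rfl
      | Sum.inr (5, 0) =>
        show Φ (t 3 0) = sgl (Sum.inr (5, 0))
        simp only [map_add, hb]
        show (sgl (Sum.inr (5, 0))) = sgl (Sum.inr (5, 0))
        rfl
      | Sum.inr (5, 1) =>
        show Φ (t 3 1 + t 2 0) = sgl (Sum.inr (5, 1))
        simp only [map_add, hb]
        show (sgl (Sum.inr (4, 3)) + sgl (Sum.inr (5, 1))) + (sgl (Sum.inr (4, 3))) = sgl (Sum.inr (5, 1))
        apply eq_of_c2; abel_nf; try simp only [e2, e4, e6, e8, nn2, nn4, nn6, nn8, smul_zero, add_zero, zero_add]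
      | Sum.inr (5, 2) =>
        show Φ (t 4 1) = sgl (Sum.inr (5, 2))
        simp only [map_add, hb]
        show (sgl (Sum.inr (5, 2))) = sgl (Sum.inr (5, 2))
        rfl
      | Sum.inr (5, 3) =>
        show Φ (t 4 0) = sgl (Sum.inr (5, 3))
        simp only [map_add, hb]
        show (sgl (Sum.inr (5, 3))) = sgl (Sum.inr (5, 3))
        rfl
      | Sum.inr (6, 0) =>
        show Φ (t 5 0) = sgl (Sum.inr (6, 0))
        simp only [map_add, hb]
        show (sgl (Sum.inr (6, 0))) = sgl (Sum.inr (6, 0))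
        rfl
      | Sum.inr (6, 1) =>
        show Φ (t 5 1 + t 4 0) = sgl (Sum.inr (6, 1))
        simp only [map_add, hb]
        show (sgl (Sum.inr (5, 3)) + sgl (Sum.inr (6, 1))) + (sgl (Sum.inr (5, 3))) = sgl (Sum.inr (6, 1))
        apply eq_of_c2; abel_nf; try simp only [e2, e4, e6, e8, nn2, nn4, nn6, nn8, smul_zero, add_zero, zero_add]
      | Sum.inr (6, 2) =>
        show Φ (t 6 1) = sgl (Sum.inr (6, 2))
        simp only [map_add, hb]
        show (sgl (Sum.inr (6, 2))) = sgl (Sum.inr (6, 2))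
        rfl
      | Sum.inr (6, 3) =>
        show Φ (t 6 0) = sgl (Sum.inr (6, 3))
        simp only [map_add, hb]
        show (sgl (Sum.inr (6, 3))) = sgl (Sum.inr (6, 3))
        rfl
      | Sum.inr (7, 0) =>
        show Φ (t 7 0) = sgl (Sum.inr (7, 0))
        simp only [map_add, hb]
        show (sgl (Sum.inr (7, 0))) = sgl (Sum.inr (7, 0))
        rfl
      | Sum.inr (7, 1) =>
        show Φ (t 7 1 + t 6 0) = sgl (Sum.inr (7, 1))
        simp only [map_add, hb]
        show (sgl (Sum.inr (6, 3)) + sgl (Sum.inr (7, 1))) + (sgl (Sum.inr (6, 3))) = sgl (Sum.inr (7, 1))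
        apply eq_of_c2; abel_nf; try simp only [e2, e4, e6, e8, nn2, nn4, nn6, nn8, smul_zero, add_zero, zero_add]
      | Sum.inr (7, 2) =>
        show Φ (t 8 1) = sgl (Sum.inr (7, 2))
        simp only [map_add, hb]
        show (sgl (Sum.inr (7, 2))) = sgl (Sum.inr (7, 2))
        rfl
      | Sum.inr (7, 3) =>
        show Φ (t 8 0) = sgl (Sum.inr (7, 3))
        simp only [map_add, hb]
        show (sgl (Sum.inr (7, 3))) = sgl (Sum.inr (7, 3))
        rfl
    have hcomp : LinearIndependent R (⇑Φ ∘ v) := by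
      have he : ⇑Φ ∘ v = sgl := funext hvk
      rw [he]; exact sgl_indep
    exact LinearIndependent.of_comp Φ hcomp
  · set v := Sum.elim zel (fun p : Fin 8 × Fin 4 => wel p.1 p.2) with hv
    have ht : ∀ (i : Fin 9) (j : Fin 5), t i j ∈ Submodule.span R (Set.range v) := by
      intro i j
      have hm : ∀ k : K, v k ∈ Submodule.span R (Set.range v) := fun k => Submodule.subset_span ⟨k, rfl⟩
      match i, j with
      | 0, 0 =>
        have he : t 0 0 = v (Sum.inl 0) := by
          show t 0 0 = (t 0 0)
          rfl
        rw [he]; exact hm (Sum.inl 0)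
      | 0, 1 =>
        have he : t 0 1 = v (Sum.inl 1) := by
          show t 0 1 = (t 0 1)
          rfl
        rw [he]; exact hm (Sum.inl 1)
      | 0, 2 =>
        have he : t 0 2 = v (Sum.inl 2) + v (Sum.inr (0, 3)) + v (Sum.inr (1, 1)) + v (Sum.inr (1, 3)) := by
          show t 0 2 = (t 0 2 + t 1 3 + t 3 3 + t 4 4) + (t 1 3 + t 2 4) + (t 2 4) + (t 3 3 + t 4 4)
          apply eq_of_c2; abel_nf; try simp only [e2, e4, e6, e8, nn2, nn4, nn6, nn8, smul_zero, add_zero, zero_add]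
        rw [he]; exact add_mem (add_mem (add_mem (hm (Sum.inl 2)) (hm (Sum.inr (0, 3)))) (hm (Sum.inr (1, 1)))) (hm (Sum.inr (1, 3)))
      | 0, 3 =>
        have he : t 0 3 = v (Sum.inr (0, 2)) := by
          show t 0 3 = (t 0 3)
          rfl
        rw [he]; exact hm (Sum.inr (0, 2))
      | 0, 4 =>
        have he : t 0 4 = v (Sum.inr (0, 1)) := by
          show t 0 4 = (t 0 4)
          rfl
        rw [he]; exact hm (Sum.inr (0, 1))
      | 1, 0 =>
        have he : t 1 0 = v (Sum.inr (4, 0)) := by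
          show t 1 0 = (t 1 0)
          rfl
        rw [he]; exact hm (Sum.inr (4, 0))
      | 1, 1 =>
        have he : t 1 1 = v (Sum.inl 0) + v (Sum.inr (4, 1)) := by
          show t 1 1 = (t 0 0) + (t 1 1 + t 0 0)
          apply eq_of_c2; abel_nf; try simp only [e2, e4, e6, e8, nn2, nn4, nn6, nn8, smul_zero, add_zero, zero_add]
        rw [he]; exact add_mem (hm (Sum.inl 0)) (hm (Sum.inr (4, 1)))
      | 1, 2 =>
        have he : t 1 2 = v (Sum.inl 3) := by
          show t 1 2 = (t 1 2)
          rfl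
        rw [he]; exact hm (Sum.inl 3)
      | 1, 3 =>
        have he : t 1 3 = v (Sum.inr (0, 3)) + v (Sum.inr (1, 1)) := by
          show t 1 3 = (t 1 3 + t 2 4) + (t 2 4)
          apply eq_of_c2; abel_nf; try simp only [e2, e4, e6, e8, nn2, nn4, nn6, nn8, smul_zero, add_zero, zero_add]
        rw [he]; exact add_mem (hm (Sum.inr (0, 3))) (hm (Sum.inr (1, 1)))
      | 1, 4 =>
        have he : t 1 4 = v (Sum.inr (0, 0)) := by
          show t 1 4 = (t 1 4)
          rfl
        rw [he]; exact hm (Sum.inr (0, 0))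
      | 2, 0 =>
        have he : t 2 0 = v (Sum.inr (4, 3)) := by
          show t 2 0 = (t 2 0)
          rfl
        rw [he]; exact hm (Sum.inr (4, 3))
      | 2, 1 =>
        have he : t 2 1 = v (Sum.inr (4, 2)) := by
          show t 2 1 = (t 2 1)
          rfl
        rw [he]; exact hm (Sum.inr (4, 2))
      | 2, 2 =>
        have he : t 2 2 = v (Sum.inl 0) + v (Sum.inl 4) + v (Sum.inr (1, 3)) + v (Sum.inr (4, 1)) := by
          show t 2 2 = (t 0 0) + (t 2 2 + t 3 3 + t 1 1 + t 4 4) + (t 3 3 + t 4 4) + (t 1 1 + t 0 0)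
          apply eq_of_c2; abel_nf; try simp only [e2, e4, e6, e8, nn2, nn4, nn6, nn8, smul_zero, add_zero, zero_add]
        rw [he]; exact add_mem (add_mem (add_mem (hm (Sum.inl 0)) (hm (Sum.inl 4))) (hm (Sum.inr (1, 3)))) (hm (Sum.inr (4, 1)))
      | 2, 3 =>
        have he : t 2 3 = v (Sum.inr (1, 2)) := by
          show t 2 3 = (t 2 3)
          rfl
        rw [he]; exact hm (Sum.inr (1, 2))
      | 2, 4 =>
        have he : t 2 4 = v (Sum.inr (1, 1)) := by
          show t 2 4 = (t 2 4)
          rfl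
        rw [he]; exact hm (Sum.inr (1, 1))
      | 3, 0 =>
        have he : t 3 0 = v (Sum.inr (5, 0)) := by
          show t 3 0 = (t 3 0)
          rfl
        rw [he]; exact hm (Sum.inr (5, 0))
      | 3, 1 =>
        have he : t 3 1 = v (Sum.inr (4, 3)) + v (Sum.inr (5, 1)) := by
          show t 3 1 = (t 2 0) + (t 3 1 + t 2 0)
          apply eq_of_c2; abel_nf; try simp only [e2, e4, e6, e8, nn2, nn4, nn6, nn8, smul_zero, add_zero, zero_add]
        rw [he]; exact add_mem (hm (Sum.inr (4, 3))) (hm (Sum.inr (5, 1)))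
      | 3, 2 =>
        have he : t 3 2 = v (Sum.inl 5) + v (Sum.inr (2, 0)) + v (Sum.inr (4, 0)) := by
          show t 3 2 = (t 3 2 + t 5 4 + t 1 0) + (t 5 4) + (t 1 0)
          apply eq_of_c2; abel_nf; try simp only [e2, e4, e6, e8, nn2, nn4, nn6, nn8, smul_zero, add_zero, zero_add]
        rw [he]; exact add_mem (add_mem (hm (Sum.inl 5)) (hm (Sum.inr (2, 0)))) (hm (Sum.inr (4, 0)))
      | 3, 3 =>
        have he : t 3 3 = v (Sum.inr (1, 3)) + v (Sum.inr (2, 1)) := by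
          show t 3 3 = (t 3 3 + t 4 4) + (t 4 4)
          apply eq_of_c2; abel_nf; try simp only [e2, e4, e6, e8, nn2, nn4, nn6, nn8, smul_zero, add_zero, zero_add]
        rw [he]; exact add_mem (hm (Sum.inr (1, 3))) (hm (Sum.inr (2, 1)))
      | 3, 4 =>
        have he : t 3 4 = v (Sum.inr (1, 0)) := by
          show t 3 4 = (t 3 4)
          rfl
        rw [he]; exact hm (Sum.inr (1, 0))
      | 4, 0 =>
        have he : t 4 0 = v (Sum.inr (5, 3)) := by
          show t 4 0 = (t 4 0)
          rfl
        rw [he]; exact hm (Sum.inr (5, 3))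
      | 4, 1 =>
        have he : t 4 1 = v (Sum.inr (5, 2)) := by
          show t 4 1 = (t 4 1)
          rfl
        rw [he]; exact hm (Sum.inr (5, 2))
      | 4, 2 =>
        have he : t 4 2 = v (Sum.inl 6) + v (Sum.inr (2, 3)) + v (Sum.inr (5, 1)) := by
          show t 4 2 = (t 4 2 + t 5 3 + t 3 1 + t 6 4 + t 2 0) + (t 5 3 + t 6 4) + (t 3 1 + t 2 0)
          apply eq_of_c2; abel_nf; try simp only [e2, e4, e6, e8, nn2, nn4, nn6, nn8, smul_zero, add_zero, zero_add]
        rw [he]; exact add_mem (add_mem (hm (Sum.inl 6)) (hm (Sum.inr (2, 3)))) (hm (Sum.inr (5, 1)))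
      | 4, 3 =>
        have he : t 4 3 = v (Sum.inr (2, 2)) := by
          show t 4 3 = (t 4 3)
          rfl
        rw [he]; exact hm (Sum.inr (2, 2))
      | 4, 4 =>
        have he : t 4 4 = v (Sum.inr (2, 1)) := by
          show t 4 4 = (t 4 4)
          rfl
        rw [he]; exact hm (Sum.inr (2, 1))
      | 5, 0 =>
        have he : t 5 0 = v (Sum.inr (6, 0)) := by
          show t 5 0 = (t 5 0)
          rfl
        rw [he]; exact hm (Sum.inr (6, 0))
      | 5, 1 =>
        have he : t 5 1 = v (Sum.inr (5, 3)) + v (Sum.inr (6, 1)) := by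
          show t 5 1 = (t 4 0) + (t 5 1 + t 4 0)
          apply eq_of_c2; abel_nf; try simp only [e2, e4, e6, e8, nn2, nn4, nn6, nn8, smul_zero, add_zero, zero_add]
        rw [he]; exact add_mem (hm (Sum.inr (5, 3))) (hm (Sum.inr (6, 1)))
      | 5, 2 =>
        have he : t 5 2 = v (Sum.inl 7) + v (Sum.inr (3, 0)) + v (Sum.inr (5, 0)) := by
          show t 5 2 = (t 5 2 + t 7 4 + t 3 0) + (t 7 4) + (t 3 0)
          apply eq_of_c2; abel_nf; try simp only [e2, e4, e6, e8, nn2, nn4, nn6, nn8, smul_zero, add_zero, zero_add]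
        rw [he]; exact add_mem (add_mem (hm (Sum.inl 7)) (hm (Sum.inr (3, 0)))) (hm (Sum.inr (5, 0)))
      | 5, 3 =>
        have he : t 5 3 = v (Sum.inr (2, 3)) + v (Sum.inr (3, 1)) := by
          show t 5 3 = (t 5 3 + t 6 4) + (t 6 4)
          apply eq_of_c2; abel_nf; try simp only [e2, e4, e6, e8, nn2, nn4, nn6, nn8, smul_zero, add_zero, zero_add]
        rw [he]; exact add_mem (hm (Sum.inr (2, 3))) (hm (Sum.inr (3, 1)))
      | 5, 4 =>
        have he : t 5 4 = v (Sum.inr (2, 0)) := by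
          show t 5 4 = (t 5 4)
          rfl
        rw [he]; exact hm (Sum.inr (2, 0))
      | 6, 0 =>
        have he : t 6 0 = v (Sum.inr (6, 3)) := by
          show t 6 0 = (t 6 0)
          rfl
        rw [he]; exact hm (Sum.inr (6, 3))
      | 6, 1 =>
        have he : t 6 1 = v (Sum.inr (6, 2)) := by
          show t 6 1 = (t 6 1)
          rfl
        rw [he]; exact hm (Sum.inr (6, 2))
      | 6, 2 =>
        have he : t 6 2 = v (Sum.inl 8) + v (Sum.inl 12) + v (Sum.inr (3, 3)) + v (Sum.inr (6, 1)) := by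
          show t 6 2 = (t 6 2 + t 7 3 + t 5 1 + t 4 0) + (t 8 4) + (t 7 3 + t 8 4) + (t 5 1 + t 4 0)
          apply eq_of_c2; abel_nf; try simp only [e2, e4, e6, e8, nn2, nn4, nn6, nn8, smul_zero, add_zero, zero_add]
        rw [he]; exact add_mem (add_mem (add_mem (hm (Sum.inl 8)) (hm (Sum.inl 12))) (hm (Sum.inr (3, 3)))) (hm (Sum.inr (6, 1)))
      | 6, 3 =>
        have he : t 6 3 = v (Sum.inr (3, 2)) := by
          show t 6 3 = (t 6 3)
          rfl
        rw [he]; exact hm (Sum.inr (3, 2))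
      | 6, 4 =>
        have he : t 6 4 = v (Sum.inr (3, 1)) := by
          show t 6 4 = (t 6 4)
          rfl
        rw [he]; exact hm (Sum.inr (3, 1))
      | 7, 0 =>
        have he : t 7 0 = v (Sum.inr (7, 0)) := by
          show t 7 0 = (t 7 0)
          rfl
        rw [he]; exact hm (Sum.inr (7, 0))
      | 7, 1 =>
        have he : t 7 1 = v (Sum.inr (6, 3)) + v (Sum.inr (7, 1)) := by
          show t 7 1 = (t 6 0) + (t 7 1 + t 6 0)
          apply eq_of_c2; abel_nf; try simp only [e2, e4, e6, e8, nn2, nn4, nn6, nn8, smul_zero, add_zero, zero_add]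
        rw [he]; exact add_mem (hm (Sum.inr (6, 3))) (hm (Sum.inr (7, 1)))
      | 7, 2 =>
        have he : t 7 2 = v (Sum.inl 9) := by
          show t 7 2 = (t 7 2)
          rfl
        rw [he]; exact hm (Sum.inl 9)
      | 7, 3 =>
        have he : t 7 3 = v (Sum.inl 12) + v (Sum.inr (3, 3)) := by
          show t 7 3 = (t 8 4) + (t 7 3 + t 8 4)
          apply eq_of_c2; abel_nf; try simp only [e2, e4, e6, e8, nn2, nn4, nn6, nn8, smul_zero, add_zero, zero_add]
        rw [he]; exact add_mem (hm (Sum.inl 12)) (hm (Sum.inr (3, 3)))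
      | 7, 4 =>
        have he : t 7 4 = v (Sum.inr (3, 0)) := by
          show t 7 4 = (t 7 4)
          rfl
        rw [he]; exact hm (Sum.inr (3, 0))
      | 8, 0 =>
        have he : t 8 0 = v (Sum.inr (7, 3)) := by
          show t 8 0 = (t 8 0)
          rfl
        rw [he]; exact hm (Sum.inr (7, 3))
      | 8, 1 =>
        have he : t 8 1 = v (Sum.inr (7, 2)) := by
          show t 8 1 = (t 8 1)
          rfl
        rw [he]; exact hm (Sum.inr (7, 2))
      | 8, 2 =>
        have he : t 8 2 = v (Sum.inl 10) + v (Sum.inr (6, 1)) + v (Sum.inr (6, 3)) + v (Sum.inr (7, 1)) := by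
          show t 8 2 = (t 8 2 + t 7 1 + t 4 0 + t 5 1) + (t 5 1 + t 4 0) + (t 6 0) + (t 7 1 + t 6 0)
          apply eq_of_c2; abel_nf; try simp only [e2, e4, e6, e8, nn2, nn4, nn6, nn8, smul_zero, add_zero, zero_add]
        rw [he]; exact add_mem (add_mem (add_mem (hm (Sum.inl 10)) (hm (Sum.inr (6, 1)))) (hm (Sum.inr (6, 3)))) (hm (Sum.inr (7, 1)))
      | 8, 3 =>
        have he : t 8 3 = v (Sum.inl 11) := by
          show t 8 3 = (t 8 3)
          rfl
        rw [he]; exact hm (Sum.inl 11)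
      | 8, 4 =>
        have he : t 8 4 = v (Sum.inl 12) := by
          show t 8 4 = (t 8 4)
          rfl
        rw [he]; exact hm (Sum.inl 12)
    rw [eq_top_iff, ← bT.span_eq, Submodule.span_le]
    rintro _ ⟨⟨i, j⟩, rfl⟩
    rw [bT_eq]
    exact ht i j
  · rw [Submodule.span_le]
    rintro _ ⟨k, rfl⟩
    refine Submodule.mem_comap.2 ?_
    have hm : ∀ m : Fin 13, zel m ∈ Submodule.span R (Set.range zel) := fun m => Submodule.subset_span ⟨m, rfl⟩
    match k with
    | 0 => rw [hz0]; exact hm 1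
    | 1 => rw [hz1]; exact zero_mem _
    | 2 => rw [hz2]; exact hm 1
    | 3 => rw [hz3]; exact add_mem (hm 2) (hm 4)
    | 4 => rw [hz4]; exact hm 1
    | 5 => rw [hz5]; exact add_mem (add_mem (hm 0) (hm 4)) (hm 6)
    | 6 => rw [hz6]; exact zero_mem _
    | 7 => rw [hz7]; exact add_mem (add_mem (hm 6) (hm 8)) (hm 12)
    | 8 => rw [hz8]; exact hm 11
    | 9 => rw [hz9]; exact add_mem (hm 8) (hm 10)
    | 10 => rw [hz10]; exact hm 11
    | 11 => rw [hz11]; exact zero_mem _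
    | 12 => rw [hz12]; exact hm 11
  · intro i
    refine ⟨?_, hw0 i, hw1 i, hw2 i, hw3 i⟩
    rw [Submodule.span_le]
    rintro _ ⟨j, rfl⟩
    refine Submodule.mem_comap.2 ?_
    have hm : ∀ m : Fin 4, wel i m ∈ Submodule.span R (Set.range (wel i)) := fun m => Submodule.subset_span ⟨m, rfl⟩
    match j with
    | 0 => rw [hw0]; exact add_mem (hm 1) (hm 3)
    | 1 => rw [hw1]; exact hm 2
    | 2 => rw [hw2]; exact zero_mem _
    | 3 => rw [hw3]; exact hm 2

end
end

section
/- In the quotient complex A_1^+ = C / N_1 with induced differential δ̄, the image of U z_6 is nonzero, satisfies δ̄(U z_6) = 0, and does not lie in the image of δ̄; that is, the homology class of U z_6 in H(A_1^+) is nonzero. (This is the statement that the cycle U z_6 is non-zero in H_*(A_1^+), reflecting V_1(T_{2,9} # -T_{2,3;2,5}) > 0.) -/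
/-!
Let `F = ℤ/2ℤ`, `R = F[U, U⁻¹]` (`U = LaurentPolynomial.T 1`), and let `C` be
the free `R`-module on generators `z 0, ..., z 12` with the differential `δ`
of the summand of `CFK^∞(T_{2,9} # -T_{2,3;2,5})`.  Each `z i` has bifiltration
level `(fa i, fb i)`, and `U^n • z i` has level `(fa i - n, fb i - n)`.  For
`k : ℤ`, `N k` is the `F`-linear span of `{U^n • z i : n ≥ max (fa i) (fb i - k) + 1}`
(the part with `max(i, j-k) < 0`); `δ (N k) ⊆ N k`, and `Aplus k := C ⧸ N k` is
the quotient complex with induced differential `δ̄`, a model for `A_k^+`.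

STATEMENT: In `A_1^+ = C ⧸ N 1`, the image of `U • z 6` is nonzero, is a cycle
for the induced differential, and is not a boundary; i.e., its homology class
in `H(A_1^+)` is nonzero.
-/

noncomputable section

abbrev F : Type := ZMod 2

/-- The variable `U` of the Laurent polynomial ring. -/
def U : R := LaurentPolynomial.T 1

/-- The first (Alexander `i`) filtration levels of `z_0, ..., z_12`. -/
def fa : Fin 13 → ℤ := ![0, -1, -1, 0, 0, 1, 1, 2, 2, 3, 3, 0, 0]

/-- The second (Alexander `j`) filtration levels of `z_0, ..., z_12`. -/
def fb : Fin 13 → ℤ := ![0, 0, 3, 3, 2, 2, 1, 1, 0, 0, -1, -1, 0]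

/-- `N k` is the `F`-linear span of the `U^n • z i` with
`n ≥ max (fa i) (fb i - k) + 1`, i.e. the part of `C` lying in
`max(i-filtration, j-filtration - k) < 0`. -/
def N (k : ℤ) : Submodule F C :=
  Submodule.span F
    {v : C | ∃ (i : Fin 13) (n : ℤ),
      max (fa i) (fb i - k) + 1 ≤ n ∧ v = (LaurentPolynomial.T n : R) • z i}


/-! Auxiliary: a linear functional `ψ` detecting the coefficient of `U` in the
components `2, 4, 6, 8, 10`; it kills `N 1` and the image of `δ`, but equals
`1` on `U • z 6`. -/

def ψ : C →ₗ[F] F :=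
  ((Finsupp.lapply 1).comp (AddMonoidAlgebra.coeffLinearEquiv F).toLinearMap).comp
    ((LinearMap.proj (2 : Fin 13) : C →ₗ[F] R) + LinearMap.proj 4 + LinearMap.proj 6 +
      LinearMap.proj 8 + LinearMap.proj 10)

lemma ψ_apply (v : C) : ψ v = (v 2).coeff 1 + (v 4).coeff 1 + (v 6).coeff 1 + (v 8).coeff 1 + (v 10).coeff 1 := rfl

lemma psi_smul (p : R) (i : Fin 13) :
    ψ (p • z i) = if i = 2 ∨ i = 4 ∨ i = 6 ∨ i = 8 ∨ i = 10 then p.coeff 1 else 0 := by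
  fin_cases i <;>
    simp [ψ_apply, z, Pi.single_apply, Pi.smul_apply, smul_eq_mul]

lemma coeffT (n m : ℤ) : (LaurentPolynomial.T n : R).coeff m = if n = m then 1 else 0 := by
  exact LaurentPolynomial.T_apply m n

lemma hker : N 1 ≤ LinearMap.ker ψ := by
  rw [N, Submodule.span_le]
  rintro v ⟨i, n, hn, rfl⟩
  simp only [SetLike.mem_coe, LinearMap.mem_ker, psi_smul]
  split_ifs with h
  · have hm : (1 : ℤ) ≤ max (fa i) (fb i - 1) := by
      rcases h with h | h | h | h | h <;> subst h <;> decide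
    rw [coeffT]
    simp only [ite_eq_right_iff]
    omega
  · rfl

lemma single_eq_smul (i : Fin 13) (r : R) : Pi.single i r = r • z i := by
  funext j
  by_cases h : j = i <;> simp [z, Pi.single_apply, h]

lemma psi_delta (δ : C →ₗ[R] C)
    (h0 : δ (z 0) = z 1) (h1 : δ (z 1) = 0)
    (h2 : δ (z 2) = z 1) (h3 : δ (z 3) = z 2 + z 4)
    (h4 : δ (z 4) = z 1) (h5 : δ (z 5) = z 0 + z 4 + z 6)
    (h6 : δ (z 6) = 0) (h7 : δ (z 7) = z 6 + z 8 + z 12)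
    (h8 : δ (z 8) = z 11) (h9 : δ (z 9) = z 8 + z 10)
    (h10 : δ (z 10) = z 11) (h11 : δ (z 11) = 0)
    (h12 : δ (z 12) = z 11) (v : C) : ψ (δ v) = 0 := by
  have hv : v = ∑ i : Fin 13, (v i) • z i := by
    conv_lhs => rw [← Finset.univ_sum_single v]
    exact Finset.sum_congr rfl fun i _ => single_eq_smul i (v i)
  rw [hv, map_sum, map_sum]
  apply Finset.sum_eq_zero
  intro i _
  fin_cases i <;>
    simp [map_smul, h0, h1, h2, h3, h4, h5, h6, h7, h8, h9, h10, h11, h12,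
      smul_add, psi_smul, CharTwo.add_self_eq_zero]

lemma psi_Uz6 : ψ (U • z 6) = 1 := by
  rw [U, psi_smul]
  norm_num [coeffT]

theorem Uz6_nonzero_in_homology_of_A1plus
    (δ : C →ₗ[R] C)
    (h0 : δ (z 0) = z 1) (h1 : δ (z 1) = 0)
    (h2 : δ (z 2) = z 1) (h3 : δ (z 3) = z 2 + z 4)
    (h4 : δ (z 4) = z 1) (h5 : δ (z 5) = z 0 + z 4 + z 6)
    (h6 : δ (z 6) = 0) (h7 : δ (z 7) = z 6 + z 8 + z 12)
    (h8 : δ (z 8) = z 11) (h9 : δ (z 9) = z 8 + z 10)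
    (h10 : δ (z 10) = z 11) (h11 : δ (z 11) = 0)
    (h12 : δ (z 12) = z 11)
    (hstab : N 1 ≤ (N 1).comap (LinearMap.restrictScalars F δ)) :
    letI π : C →ₗ[F] C ⧸ N 1 := (N 1).mkQ
    letI δbar : (C ⧸ N 1) →ₗ[F] C ⧸ N 1 :=
      Submodule.mapQ (N 1) (N 1) (LinearMap.restrictScalars F δ) hstab
    π (U • z 6) ≠ 0 ∧
    δbar (π (U • z 6)) = 0 ∧
    ∀ c : C ⧸ N 1, δbar c ≠ π (U • z 6) := by
  refine ⟨?_, ?_, ?_⟩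
  · intro hz
    rw [Submodule.mkQ_apply, Submodule.Quotient.mk_eq_zero] at hz
    have := hker hz
    rw [LinearMap.mem_ker, psi_Uz6] at this
    exact one_ne_zero this
  · rw [Submodule.mkQ_apply, Submodule.mapQ_apply]
    have : δ (U • z 6) = 0 := by rw [map_smul, h6, smul_zero]
    simp only [LinearMap.restrictScalars_apply, this]
    exact (Submodule.Quotient.mk_eq_zero _).2 (Submodule.zero_mem _)
  · intro c hc
    obtain ⟨v, rfl⟩ := Submodule.mkQ_surjective (N 1) c
    rw [Submodule.mkQ_apply, Submodule.mapQ_apply, Submodule.mkQ_apply,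
      Submodule.Quotient.eq] at hc
    have h0' := hker hc
    rw [LinearMap.mem_ker, map_sub, psi_Uz6, LinearMap.restrictScalars_apply,
      psi_delta δ h0 h1 h2 h3 h4 h5 h6 h7 h8 h9 h10 h11 h12 v, zero_sub] at h0'
    exact one_ne_zero (neg_eq_zero.mp h0')


end
end

section
/- In the quotient complex A_2^+ = C / N_2 with induced differential δ̄, the image of z_6 is nonzero, satisfies δ̄(z_6) = 0, and does not lie in the image of δ̄; that is, the homology class of z_6 in H(A_2^+) is nonzero. (Together with the nonvanishing of [U z_6] in H(A_1^+) and the fact that U z_6 is a boundary in A_2^+, this establishes nu^+(T_{2,9} # -T_{2,3;2,5}) = 2.) -/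
/-!
Let `F = ℤ/2ℤ`, `R = F[U, U⁻¹]` (`U = LaurentPolynomial.T 1`), and let `C` be
the free `R`-module on generators `z 0, ..., z 12` with the differential `δ`
of the summand of `CFK^∞(T_{2,9} # -T_{2,3;2,5})`.  Each `z i` has bifiltration
level `(fa i, fb i)`, and `U^n • z i` has level `(fa i - n, fb i - n)`.  For
`k : ℤ`, `N k` is the `F`-linear span of `{U^n • z i : n ≥ max (fa i) (fb i - k) + 1}`
(the part with `max(i, j-k) < 0`); `δ (N k) ⊆ N k`, and `Aplus k := C ⧸ N k` is
the quotient complex with induced differential `δ̄`, a model for `A_k^+`.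

STATEMENT: In `A_2^+ = C ⧸ N 2`, the image of `z 6` is nonzero, is a cycle for
the induced differential, and is not a boundary; i.e., its homology class in
`H(A_2^+)` is nonzero.
-/

noncomputable section

/-- Coefficient-at-0 functional on `R` (as an `F`-linear map via the Finsupp model). -/
def cf : R →ₗ[F] F := Finsupp.lapply (0 : ℤ) ∘ₗ (AddMonoidAlgebra.coeffLinearEquiv F).toLinearMap

lemma cf_T (n : ℤ) : cf (LaurentPolynomial.T n) = if n = 0 then 1 else 0 := by
  simp [cf, eq_comm]

lemma cf_one : cf 1 = 1 := by
  have := cf_T 0; rwa [LaurentPolynomial.T_zero, if_pos rfl] at this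

/-- The functional `φ` : sum of coefficients at 0 of coordinates 2, 4, 6, 8, 10. -/
def φ : C →ₗ[F] F :=
  cf ∘ₗ .proj 2 + cf ∘ₗ .proj 4 + cf ∘ₗ .proj 6 + cf ∘ₗ .proj 8 + cf ∘ₗ .proj 10

lemma φ_apply (v : C) : φ v = cf (v 2) + cf (v 4) + cf (v 6) + cf (v 8) + cf (v 10) := rfl

lemma φ_smul_z (p : R) (j : Fin 13) :
    φ (p • z j) = if j = 2 ∨ j = 4 ∨ j = 6 ∨ j = 8 ∨ j = 10 then cf p else 0 := by
  have hc : ∀ k : Fin 13, cf ((p • z j) k) = if j = k then cf p else 0 := by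
    intro k
    by_cases h : j = k
    · subst h; simp [z]
    · rw [if_neg h]
      have hz : z j k = 0 := Pi.single_eq_of_ne (Ne.symm h) 1
      simp [hz]
  rw [φ_apply, hc, hc, hc, hc, hc]
  by_cases h2 : j = 2 <;> by_cases h4 : j = 4 <;> by_cases h6 : j = 6 <;>
    by_cases h8 : j = 8 <;> by_cases h10 : j = 10 <;> simp_all

lemma φ_z6 : φ (z 6) = 1 := by
  rw [show (z 6 : C) = (1 : R) • z 6 by rw [one_smul], φ_smul_z]
  simp [cf_one]

lemma N2_le_ker_φ : N 2 ≤ LinearMap.ker φ := by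
  rw [N]
  apply Submodule.span_le.mpr
  rintro v ⟨i, n, hn, rfl⟩
  simp only [SetLike.mem_coe, LinearMap.mem_ker]
  rw [φ_smul_z]
  split_ifs with h
  · rcases h with h | h | h | h | h <;> subst h
    · rw [show fa 2 = -1 from rfl, show fb 2 = 3 from rfl] at hn
      rw [cf_T, if_neg (by omega)]
    · rw [show fa 4 = 0 from rfl, show fb 4 = 2 from rfl] at hn
      rw [cf_T, if_neg (by omega)]
    · rw [show fa 6 = 1 from rfl, show fb 6 = 1 from rfl] at hn
      rw [cf_T, if_neg (by omega)]
    · rw [show fa 8 = 2 from rfl, show fb 8 = 0 from rfl] at hn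
      rw [cf_T, if_neg (by omega)]
    · rw [show fa 10 = 3 from rfl, show fb 10 = -1 from rfl] at hn
      rw [cf_T, if_neg (by omega)]
  · rfl

set_option maxHeartbeats 1000000 in
theorem z6_nonzero_in_homology_of_A2plus
    (δ : C →ₗ[R] C)
    (h0 : δ (z 0) = z 1) (h1 : δ (z 1) = 0)
    (h2 : δ (z 2) = z 1) (h3 : δ (z 3) = z 2 + z 4)
    (h4 : δ (z 4) = z 1) (h5 : δ (z 5) = z 0 + z 4 + z 6)
    (h6 : δ (z 6) = 0) (h7 : δ (z 7) = z 6 + z 8 + z 12)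
    (h8 : δ (z 8) = z 11) (h9 : δ (z 9) = z 8 + z 10)
    (h10 : δ (z 10) = z 11) (h11 : δ (z 11) = 0)
    (h12 : δ (z 12) = z 11)
    (hstab : N 2 ≤ (N 2).comap (LinearMap.restrictScalars F δ)) :
    letI π : C →ₗ[F] C ⧸ N 2 := (N 2).mkQ
    letI δbar : (C ⧸ N 2) →ₗ[F] C ⧸ N 2 :=
      Submodule.mapQ (N 2) (N 2) (LinearMap.restrictScalars F δ) hstab
    π (z 6) ≠ 0 ∧
    δbar (π (z 6)) = 0 ∧
    ∀ c : C ⧸ N 2, δbar c ≠ π (z 6) := by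
  have hv : ∀ v : C, v = ∑ i : Fin 13, v i • z i := by
    intro v; funext k; simp [z, Pi.single_apply, Finset.sum_ite_eq]
  have hφδ : ∀ v : C, φ (δ v) = 0 := by
    intro v
    have hs : φ (δ v) = ∑ i : Fin 13, φ (v i • δ (z i)) := by
      calc φ (δ v) = φ (δ (∑ i : Fin 13, v i • z i)) := by rw [← hv v]
        _ = ∑ i : Fin 13, φ (v i • δ (z i)) := by simp only [map_sum, map_smul]
    rw [hs]
    apply Finset.sum_eq_zero
    intro i _
    fin_cases i <;>
      simp [h0, h1, h2, h3, h4, h5, h6, h7, h8, h9, h10, h11, h12,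
        smul_add, φ_smul_z, CharTwo.add_self_eq_zero]
  refine ⟨?_, ?_, ?_⟩
  · intro h
    rw [Submodule.mkQ_apply, Submodule.Quotient.mk_eq_zero] at h
    have := N2_le_ker_φ h
    rw [LinearMap.mem_ker, φ_z6] at this
    exact one_ne_zero this
  · rw [Submodule.mkQ_apply, Submodule.mapQ_apply]
    rw [show (LinearMap.restrictScalars F δ) (z 6) = δ (z 6) from rfl, h6]
    exact (Submodule.Quotient.mk_eq_zero _).mpr (Submodule.zero_mem _)
  · intro c hc
    obtain ⟨v, rfl⟩ := Submodule.mkQ_surjective (N 2) c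
    rw [Submodule.mkQ_apply, Submodule.mapQ_apply] at hc
    rw [show (LinearMap.restrictScalars F δ) v = δ v from rfl] at hc
    rw [Submodule.mkQ_apply, Submodule.Quotient.eq] at hc
    have hk := N2_le_ker_φ hc
    rw [LinearMap.mem_ker, map_sub, hφδ v, φ_z6] at hk
    simp at hk


end
end

section
/- The map v̂_1 is a chain map (d ∘ v̂_1 = v̂_1 ∘ d̂_1), and the induced map on homology H(Â_1) → H(B̂) is nonzero: indeed d̂_1(â_0) = 0 and v̂_1(â_0) = b_0, whose homology class generates H(B̂). (This is the statement that v̂_1 induces a nontrivial map on homology, showing nu(T_{2,9} # -T_{2,3;2,5}) ≤ 1.) -/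
/-!
Let `F = ℤ/2ℤ`. `Bhat` (with basis `b 0, ..., b 12` and differential `d`) and
`Ahat1` (with basis `a 0, ..., a 12` and differential `d1`) are the 13-dimensional
`F`-vector space complexes described in the context, and `v1 : Ahat1 → Bhat` is
the `F`-linear map with `v1 (a i) = b i` for `i ∈ {0,1,5,6,7,8,9,10,11,12}` and
`v1 (a i) = 0` for `i ∈ {2,3,4}`.

STATEMENT: `v1` is a chain map (`d ∘ v1 = v1 ∘ d1`), and the induced map on
homology `H(Ahat1) → H(Bhat)` is nonzero: indeed `d1 (a 0) = 0` and
`v1 (a 0) = b 0`, whose homology class generates `H(Bhat)` (every cycle of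
`Bhat` is uniquely `r • b 0` plus a boundary; in particular `[b 0] ≠ 0`).
-/

noncomputable section

abbrev Bhat : Type := Fin 13 → F
abbrev Ahat1 : Type := Fin 13 → F

/-- The standard basis of `Bhat`, modeling `b_0, ..., b_12`. -/
def b (i : Fin 13) : Bhat := Pi.single i 1

/-- The standard basis of `Ahat1`, modeling `â_0, ..., â_12`. -/
def a (i : Fin 13) : Ahat1 := Pi.single i 1

theorem v1_chain_map_nontrivial_on_homology
    (d : Bhat →ₗ[F] Bhat)
    (hb0 : d (b 0) = 0) (hb1 : d (b 1) = 0)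
    (hb2 : d (b 2) = b 1) (hb3 : d (b 3) = b 4)
    (hb4 : d (b 4) = 0) (hb5 : d (b 5) = b 6)
    (hb6 : d (b 6) = 0) (hb7 : d (b 7) = b 8)
    (hb8 : d (b 8) = 0) (hb9 : d (b 9) = b 10)
    (hb10 : d (b 10) = 0) (hb11 : d (b 11) = 0)
    (hb12 : d (b 12) = b 11)
    (d1 : Ahat1 →ₗ[F] Ahat1)
    (ha0 : d1 (a 0) = 0) (ha1 : d1 (a 1) = 0)
    (ha2 : d1 (a 2) = 0) (ha3 : d1 (a 3) = a 2)
    (ha4 : d1 (a 4) = 0) (ha5 : d1 (a 5) = a 4 + a 6)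
    (ha6 : d1 (a 6) = 0) (ha7 : d1 (a 7) = a 8)
    (ha8 : d1 (a 8) = 0) (ha9 : d1 (a 9) = a 10)
    (ha10 : d1 (a 10) = 0) (ha11 : d1 (a 11) = 0)
    (ha12 : d1 (a 12) = a 11)
    (v1 : Ahat1 →ₗ[F] Bhat)
    (hv0 : v1 (a 0) = b 0) (hv1 : v1 (a 1) = b 1)
    (hv2 : v1 (a 2) = 0) (hv3 : v1 (a 3) = 0)
    (hv4 : v1 (a 4) = 0) (hv5 : v1 (a 5) = b 5)
    (hv6 : v1 (a 6) = b 6) (hv7 : v1 (a 7) = b 7)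
    (hv8 : v1 (a 8) = b 8) (hv9 : v1 (a 9) = b 9)
    (hv10 : v1 (a 10) = b 10) (hv11 : v1 (a 11) = b 11)
    (hv12 : v1 (a 12) = b 12) :
    d.comp v1 = v1.comp d1 ∧
    d1 (a 0) = 0 ∧ v1 (a 0) = b 0 ∧
    (∀ c : Bhat, d c = 0 → ∃! r : F, ∃ e : Bhat, c = r • b 0 + d e) := by
  have hrep : ∀ x : Bhat, x = x 0 • b 0 + x 1 • b 1 + x 2 • b 2 + x 3 • b 3 +
      x 4 • b 4 + x 5 • b 5 + x 6 • b 6 + x 7 • b 7 + x 8 • b 8 + x 9 • b 9 +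
      x 10 • b 10 + x 11 • b 11 + x 12 • b 12 := by
    intro x; funext j
    fin_cases j <;> simp [b, Pi.single_apply]
  have hd : ∀ x : Bhat,
      d x = x 2 • b 1 + x 3 • b 4 + x 5 • b 6 + x 7 • b 8 + x 9 • b 10 + x 12 • b 11 := by
    intro x
    conv_lhs => rw [hrep x]
    simp only [map_add, map_smul, hb0, hb1, hb2, hb3, hb4, hb5, hb6, hb7, hb8, hb9,
      hb10, hb11, hb12, smul_zero, add_zero, zero_add]
  have hrepA : ∀ x : Ahat1, x = x 0 • a 0 + x 1 • a 1 + x 2 • a 2 + x 3 • a 3 +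
      x 4 • a 4 + x 5 • a 5 + x 6 • a 6 + x 7 • a 7 + x 8 • a 8 + x 9 • a 9 +
      x 10 • a 10 + x 11 • a 11 + x 12 • a 12 := by
    intro x; funext j
    fin_cases j <;> simp [a, Pi.single_apply]
  refine ⟨?_, ha0, hv0, ?_⟩
  · apply LinearMap.ext
    intro x
    simp only [LinearMap.comp_apply]
    conv_lhs => rw [hrepA x]
    conv_rhs => rw [hrepA x]
    simp only [map_add, map_smul, smul_add, hv0, hv1, hv2, hv3, hv4, hv5, hv6, hv7,
      hv8, hv9, hv10, hv11, hv12, ha0, ha1, ha2, ha3, ha4, ha5, ha6, ha7, ha8, ha9,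
      ha10, ha11, ha12, hb0, hb1, hb2, hb3, hb4, hb5, hb6, hb7, hb8, hb9, hb10,
      hb11, hb12, map_zero, smul_zero, add_zero, zero_add]
    try abel
  · intro c hc
    have hc' := hd c ▸ hc
    have hcoord : ∀ j : Fin 13,
        c 2 * b 1 j + c 3 * b 4 j + c 5 * b 6 j + c 7 * b 8 j + c 9 * b 10 j
          + c 12 * b 11 j = 0 := by
      intro j
      have := congrFun hc' j
      simpa [Pi.add_apply, smul_eq_mul] using this
    have h2 : c 2 = 0 := by have := hcoord 1; simpa [b, Pi.single_apply] using this
    have h3 : c 3 = 0 := by have := hcoord 4; simpa [b, Pi.single_apply] using this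
    have h5 : c 5 = 0 := by have := hcoord 6; simpa [b, Pi.single_apply] using this
    have h7 : c 7 = 0 := by have := hcoord 8; simpa [b, Pi.single_apply] using this
    have h9 : c 9 = 0 := by have := hcoord 10; simpa [b, Pi.single_apply] using this
    have h12 : c 12 = 0 := by have := hcoord 11; simpa [b, Pi.single_apply] using this
    refine ⟨c 0, ⟨c 1 • b 2 + c 4 • b 3 + c 6 • b 5 + c 8 • b 7 + c 10 • b 9 + c 11 • b 12, ?_⟩, ?_⟩
    · have hde : d (c 1 • b 2 + c 4 • b 3 + c 6 • b 5 + c 8 • b 7 + c 10 • b 9 + c 11 • b 12)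
          = c 1 • b 1 + c 4 • b 4 + c 6 • b 6 + c 8 • b 8 + c 10 • b 10 + c 11 • b 11 := by
        simp [map_add, map_smul, hb2, hb3, hb5, hb7, hb9, hb12]
      rw [hde]
      funext j
      fin_cases j <;>
        simp [b, Pi.single_apply, h2, h3, h5, h7, h9, h12]
    · rintro r ⟨e, he⟩
      have h0 := congrFun he 0
      have hde0 : d e 0 = 0 := by
        rw [hd e]
        simp [b, Pi.single_apply]
      have h0' : c 0 = r := by simpa [b, Pi.single_apply, hde0] using h0
      exact h0'.symm


end
end
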